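/- arXiv:2212.00447 — 6 statements merged into one kernel-verified Lean document; each statement's English description precedes it below -/
import Mathlib

section
/- For any function g : [0,1] → ℝ^d with finite p-variation (p ≥ 1) and any n ∈ ℕ, the Riemann sum approximation satisfies sup_{u ∈ [0,1]} ‖(1/n) ∑_{t=1}^{⌊un⌋} g(t/n) − ∫_0^{⌊un⌋/n} g(v) dv‖ ≤ n^{−1/p} ‖g‖_{p-var}, where ‖g‖_{p-var} = sup over all partitions 0 = u_0 < u_1 < … < u_m = 1 of (∑_{i=1}^m ‖g(u_i) − g(u_{i−1})‖^p)^{1/p}. -/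
open MeasureTheory Finset

/-- The set of partition sums defining the `p`-variation of `g` on `[0,1]`. -/
noncomputable def pVarSums {E : Type*} [NormedAddCommGroup E] (p : ℝ) (g : ℝ → E) : Set ℝ :=
  {V | ∃ (m : ℕ) (u : ℕ → ℝ), 0 < m ∧ u 0 = 0 ∧ u m = 1 ∧
    (∀ i < m, u i < u (i + 1)) ∧
    V = (∑ i ∈ Finset.range m, ‖g (u (i + 1)) - g (u i)‖ ^ p) ^ (1 / p)}

/-- The `p`-variation of `g` on `[0,1]`. -/
noncomputable def pVar {E : Type*} [NormedAddCommGroup E] (p : ℝ) (g : ℝ → E) : ℝ :=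
  sSup (pVarSums p g)

section Aux

variable {E : Type*} [NormedAddCommGroup E] {p : ℝ} (g : ℝ → E)

lemma pVar_nonneg (hp : 1 ≤ p) (hfin : BddAbove (pVarSums p g)) : 0 ≤ pVar p g := by
  have hmem : (∑ i ∈ Finset.range 1, ‖g ((i : ℕ) + 1 : ℕ) - g (i : ℕ)‖ ^ p) ^ (1 / p)
      ∈ pVarSums p g := by
    exact ⟨1, fun i => (i : ℝ), one_pos, by norm_num, by norm_num,
      fun i hi => by interval_cases i <;> norm_num, by push_cast; rfl⟩
  refine le_trans ?_ (le_csSup hfin hmem)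
  positivity

lemma full_sum_le (hp : 1 ≤ p) (hfin : BddAbove (pVarSums p g)) (M : ℕ) (hM : 0 < M)
    (w : ℕ → ℝ) (h0 : w 0 = 0) (h1 : w M = 1) (hmono : ∀ i < M, w i < w (i + 1)) :
    ∑ i ∈ Finset.range M, ‖g (w (i + 1)) - g (w i)‖ ^ p ≤ (pVar p g) ^ p := by
  have hp0 : 0 < p := lt_of_lt_of_le one_pos hp
  set S := ∑ i ∈ Finset.range M, ‖g (w (i + 1)) - g (w i)‖ ^ p with hS
  have hS0 : 0 ≤ S := Finset.sum_nonneg fun i _ => Real.rpow_nonneg (norm_nonneg _) p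
  have hmem : S ^ (1 / p) ∈ pVarSums p g := ⟨M, w, hM, h0, h1, hmono, rfl⟩
  have hle : S ^ (1 / p) ≤ pVar p g := le_csSup hfin hmem
  have heq : (S ^ (1 / p)) ^ p = S := by
    rw [← Real.rpow_mul hS0, one_div_mul_cancel hp0.ne', Real.rpow_one]
  calc S = (S ^ (1 / p)) ^ p := heq.symm
    _ ≤ (pVar p g) ^ p := Real.rpow_le_rpow (Real.rpow_nonneg hS0 _) hle hp0.le

lemma partition_sum_le (hp : 1 ≤ p) (hfin : BddAbove (pVarSums p g)) (M : ℕ) (hM : 0 < M)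
    (w : ℕ → ℝ) (h0 : w 0 = 0) (hle : w M ≤ 1) (hmono : ∀ i < M, w i < w (i + 1)) :
    ∑ i ∈ Finset.range M, ‖g (w (i + 1)) - g (w i)‖ ^ p ≤ (pVar p g) ^ p := by
  rcases eq_or_lt_of_le hle with h1 | h1
  · exact full_sum_le g hp hfin M hM w h0 h1 hmono
  · set w' : ℕ → ℝ := fun j => if j ≤ M then w j else 1 with hw'
    have key := full_sum_le g hp hfin (M + 1) (Nat.succ_pos M) w'
      (by simp [hw', h0]) (by simp [hw']) ?_
    · rw [Finset.sum_range_succ] at key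
      have heq : ∀ i ∈ Finset.range M,
          ‖g (w' (i + 1)) - g (w' i)‖ ^ p = ‖g (w (i + 1)) - g (w i)‖ ^ p := by
        intro i hi
        rw [Finset.mem_range] at hi
        simp only [hw']
        rw [if_pos (by omega), if_pos (by omega)]
      rw [Finset.sum_congr rfl heq] at key
      have hnn : 0 ≤ ‖g (w' (M + 1)) - g (w' M)‖ ^ p :=
        Real.rpow_nonneg (norm_nonneg _) p
      linarith
    · intro i hi
      simp only [hw']
      rcases lt_or_eq_of_le (Nat.lt_succ_iff.mp hi) with h | h
      · rw [if_pos (by omega), if_pos (by omega)]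
        exact hmono i h
      · subst h
        rw [if_pos le_rfl, if_neg (by omega)]
        exact h1

lemma sum_odd_le (a : ℕ → ℝ) (h : ∀ i, 0 ≤ a i) (k : ℕ) :
    ∑ t ∈ Finset.range k, a (2 * t + 1) ≤ ∑ i ∈ Finset.range (2 * k), a i := by
  induction k with
  | zero => simp
  | succ k ih =>
    rw [Finset.sum_range_succ, show 2 * (k + 1) = (2 * k + 1) + 1 by ring,
      Finset.sum_range_succ, Finset.sum_range_succ]
    have := h (2 * k)
    linarith

lemma sum_le_rpow_card (hp : 1 ≤ p) (k : ℕ) (hk : 0 < k) (a : ℕ → ℝ) (ha : ∀ t, 0 ≤ a t) :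
    ∑ t ∈ Finset.range k, a t
      ≤ (k : ℝ) ^ ((1 : ℝ) - 1 / p) * (∑ t ∈ Finset.range k, a t ^ p) ^ (1 / p) := by
  have hk0 : (0 : ℝ) < k := by exact_mod_cast hk
  have h := Real.arith_mean_le_rpow_mean (Finset.range k) (fun _ => (k : ℝ)⁻¹) a
    (fun i _ => by positivity) (by simp [Finset.sum_const, Finset.card_range]; field_simp)
    (fun i _ => ha i) hp
  rw [← Finset.mul_sum, ← Finset.mul_sum] at h
  have hS0 : 0 ≤ ∑ t ∈ Finset.range k, a t ^ p :=
    Finset.sum_nonneg fun t _ => Real.rpow_nonneg (ha t) p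
  rw [Real.mul_rpow (by positivity) hS0] at h
  have h2 := mul_le_mul_of_nonneg_left h hk0.le
  have key : (k : ℝ) * ((k : ℝ)⁻¹) ^ (1 / p) = (k : ℝ) ^ ((1 : ℝ) - 1 / p) := by
    rw [Real.rpow_sub hk0, Real.rpow_one, Real.inv_rpow hk0.le, div_eq_mul_inv]
    try ring
  calc ∑ t ∈ Finset.range k, a t = (k : ℝ) * ((k : ℝ)⁻¹ * ∑ t ∈ Finset.range k, a t) := by
        field_simp
    _ ≤ (k : ℝ) * (((k : ℝ)⁻¹) ^ (1 / p) * (∑ t ∈ Finset.range k, a t ^ p) ^ (1 / p)) := h2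
    _ = (k : ℝ) ^ ((1 : ℝ) - 1 / p) * (∑ t ∈ Finset.range k, a t ^ p) ^ (1 / p) := by
        rw [← mul_assoc, key]

lemma pth_sum_le (hp : 1 ≤ p) (hfin : BddAbove (pVarSums p g)) (n k : ℕ) (hk : 0 < k)
    (hkn : k ≤ n) (s : ℝ) (hs0 : 0 ≤ s) (hs1 : s < 1) :
    ∑ t ∈ Finset.range k, ‖g (((t : ℝ) + 1) / n) - g ((s + (t : ℝ)) / n)‖ ^ p
      ≤ (pVar p g) ^ p := by
  have hn : 0 < n := lt_of_lt_of_le hk hkn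
  have hn0 : (0 : ℝ) < n := by exact_mod_cast hn
  rcases eq_or_lt_of_le hs0 with h0 | h0
  · -- s = 0
    have key := partition_sum_le g hp hfin k hk (fun j => (j : ℝ) / n)
      (by simp) (by rw [div_le_one hn0]; exact_mod_cast hkn)
      (fun i hi => by
        rw [div_lt_div_iff_of_pos_right hn0]
        push_cast
        linarith)
    refine le_trans (le_of_eq (Finset.sum_congr rfl fun t ht => ?_)) key
    rw [← h0]
    push_cast
    ring_nf
  · -- 0 < s
    set w : ℕ → ℝ := fun j => if Even j then ((j / 2 : ℕ) : ℝ) / n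
      else (s + ((j / 2 : ℕ) : ℝ)) / n with hw
    have hw0 : w 0 = 0 := by simp [hw]
    have hwM : w (2 * k) = (k : ℝ) / n := by
      simp only [hw, if_pos (even_two_mul k)]
      congr 2
      omega
    have key := partition_sum_le g hp hfin (2 * k) (by omega) w hw0
      (by rw [hwM, div_le_one hn0]; exact_mod_cast hkn) ?_
    · have h2 := sum_odd_le (fun i => ‖g (w (i + 1)) - g (w i)‖ ^ p)
        (fun i => Real.rpow_nonneg (norm_nonneg _) p) k
      refine le_trans (le_of_eq (Finset.sum_congr rfl fun t ht => ?_)) (le_trans h2 key)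
      have e1 : w (2 * t + 1) = (s + (t : ℝ)) / n := by
        rw [hw]
        simp only
        rw [if_neg (by simp [parity_simps])]
        congr 2
        · congr 1
          exact_mod_cast congrArg Nat.cast (show (2 * t + 1) / 2 = t by omega)
      have e2 : w (2 * t + 1 + 1) = ((t : ℝ) + 1) / n := by
        rw [hw]
        simp only
        rw [if_pos (by refine ⟨t + 1, by ring⟩)]
        have : (2 * t + 1 + 1) / 2 = t + 1 := by omega
        rw [this]
        push_cast
        ring
      rw [e1, e2]
    · intro i hi
      rcases Nat.even_or_odd i with he | ho
      · have hodd : ¬ Even (i + 1) := by simp [parity_simps, he]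
        simp only [hw, if_pos he, if_neg hodd]
        rw [div_lt_div_iff_of_pos_right hn0]
        have : (i + 1) / 2 = i / 2 := by obtain ⟨a, rfl⟩ := he; omega
        rw [this]
        linarith
      · have hi1 : Even (i + 1) := by simp [parity_simps, ho]
        have hnotev : ¬ Even i := by simp [parity_simps, ho]
        simp only [hw, if_neg hnotev, if_pos hi1]
        rw [div_lt_div_iff_of_pos_right hn0]
        have : (i + 1) / 2 = i / 2 + 1 := by obtain ⟨a, rfl⟩ := ho; omega
        rw [this]
        push_cast
        linarith

end Aux

/-- Riemann sum approximation for functions of bounded `p`-variation: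
`sup_{u∈[0,1]} ‖(1/n) ∑_{t=1}^{⌊un⌋} g(t/n) − ∫_0^{⌊un⌋/n} g(v) dv‖ ≤ n^{−1/p} ‖g‖_{p-var}`. -/
theorem stmt_0 {d : ℕ} (p : ℝ) (hp : 1 ≤ p) (g : ℝ → EuclideanSpace ℝ (Fin d))
    (hfin : BddAbove (pVarSums p g))
    (hint : IntervalIntegrable g volume 0 1)
    (n : ℕ) (hn : 0 < n) :
    ∀ u ∈ Set.Icc (0 : ℝ) 1,
      ‖(n : ℝ)⁻¹ • ∑ t ∈ Finset.Icc 1 ⌊u * n⌋₊, g ((t : ℝ) / n)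
          - ∫ v in (0 : ℝ)..((⌊u * n⌋₊ : ℝ) / n), g v‖
        ≤ (n : ℝ) ^ (-(1 / p)) * pVar p g := by
  intro u hu
  have hp0 : 0 < p := lt_of_lt_of_le one_pos hp
  have hV0 : 0 ≤ pVar p g := pVar_nonneg g hp hfin
  have hn0 : (0 : ℝ) < n := by exact_mod_cast hn
  have hRHS0 : 0 ≤ (n : ℝ) ^ (-(1 / p)) * pVar p g :=
    mul_nonneg (Real.rpow_nonneg hn0.le _) hV0
  set k := ⌊u * n⌋₊ with hkdef
  have hkn : k ≤ n := by
    have hun : u * n ≤ n := by nlinarith [hu.2, hn0]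
    calc k ≤ ⌊(n : ℝ)⌋₊ := Nat.floor_le_floor hun
      _ = n := Nat.floor_natCast n
  rcases Nat.eq_zero_or_pos k with hk | hk
  · rw [hk]
    simp only [Nat.cast_zero, zero_div, intervalIntegral.integral_same,
      show Finset.Icc 1 0 = (∅ : Finset ℕ) by simp, Finset.sum_empty, smul_zero,
      sub_zero, norm_zero]
    exact hRHS0
  -- main case
  set a : ℕ → ℝ := fun i => (i : ℝ) / n with ha
  have hA : ∀ i, i < k → IntervalIntegrable g volume (a i) (a (i + 1)) := by
    intro i hi
    apply hint.mono_set
    rw [Set.uIcc_of_le (by norm_num : (0:ℝ) ≤ 1), Set.uIcc_of_le]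
    · apply Set.Icc_subset_Icc
      · positivity
      · rw [div_le_one hn0]
        have : i + 1 ≤ n := by omega
        exact_mod_cast this
    · rw [div_le_div_iff_of_pos_right hn0]
      exact_mod_cast Nat.le_succ i
  have hIcc : ∑ t ∈ Finset.Icc 1 k, g ((t : ℝ) / n)
      = ∑ t ∈ Finset.range k, g (((t : ℝ) + 1) / n) := by
    rw [← Finset.Ico_add_one_right_eq_Icc, Finset.sum_Ico_eq_sum_range]
    simp only [Nat.add_sub_cancel]
    refine Finset.sum_congr rfl fun i _ => ?_
    congr 2
    push_cast
    ring
  have hsplit := intervalIntegral.sum_integral_adjacent_intervals hA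
  have ha0 : a 0 = 0 := by simp [ha]
  rw [ha0] at hsplit
  set F : ℕ → ℝ → ℝ := fun t s => ‖g (((t : ℝ) + 1) / n) - g ((s + (t : ℝ)) / n)‖ with hF
  have hFint : ∀ t ∈ Finset.range k, IntervalIntegrable (F t) volume 0 1 := by
    intro t ht
    rw [Finset.mem_range] at ht
    have h1 : IntervalIntegrable (fun x => g (x * (n : ℝ)⁻¹)) volume ((t : ℝ)) ((t : ℝ) + 1) := by
      have h2 := (hA t ht).comp_mul_right (c := (n : ℝ)⁻¹)
      have e1 : a t / (n : ℝ)⁻¹ = (t : ℝ) := by simp only [ha]; field_simp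
      have e2 : a (t + 1) / (n : ℝ)⁻¹ = (t : ℝ) + 1 := by
        simp only [ha]
        push_cast
        field_simp
      rwa [e1, e2] at h2
    have h3 := h1.comp_add_right (t : ℝ)
    rw [show (t : ℝ) - t = 0 by ring, show (t : ℝ) + 1 - t = 1 by ring] at h3
    have hFeq : F t = fun s => ‖g (((t : ℝ) + 1) / n) - g ((s + (t : ℝ)) * (n : ℝ)⁻¹)‖ := by
      funext s
      simp [hF, div_eq_mul_inv]
    rw [hFeq]
    exact (intervalIntegrable_const.sub h3).norm
  have claim : ∀ s ∈ Set.Icc (0 : ℝ) 1,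
      ∑ t ∈ Finset.range k, F t s ≤ (n : ℝ) ^ ((1 : ℝ) - 1 / p) * pVar p g := by
    intro s hs
    have hC0 : 0 ≤ (n : ℝ) ^ ((1 : ℝ) - 1 / p) * pVar p g :=
      mul_nonneg (Real.rpow_nonneg hn0.le _) hV0
    rcases eq_or_lt_of_le hs.2 with h1 | h1
    · have hz : ∀ t ∈ Finset.range k, F t s = 0 := by
        intro t _
        simp only [hF, h1]
        rw [show (1 + (t : ℝ)) / n = ((t : ℝ) + 1) / n by ring_nf]
        simp
      rw [Finset.sum_congr rfl hz, Finset.sum_const, smul_zero]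
      exact hC0
    · have hkey := pth_sum_le g hp hfin n k hk hkn s hs.1 h1
      have hpm := sum_le_rpow_card hp k hk (fun t => F t s) (fun t => norm_nonneg _)
      refine le_trans hpm ?_
      have hS0 : 0 ≤ ∑ t ∈ Finset.range k, (F t s) ^ p :=
        Finset.sum_nonneg fun t _ => Real.rpow_nonneg (norm_nonneg _) _
      have hexp : 0 ≤ (1 : ℝ) - 1 / p := by
        have h1p : 1 / p ≤ 1 := by rw [div_le_one hp0]; exact hp
        linarith
      apply mul_le_mul
      · exact Real.rpow_le_rpow (by positivity) (by exact_mod_cast hkn) hexp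
      · calc (∑ t ∈ Finset.range k, (F t s) ^ p) ^ (1 / p)
            ≤ ((pVar p g) ^ p) ^ (1 / p) := by
              apply Real.rpow_le_rpow hS0 ?_ (by positivity)
              simpa only [hF] using hkey
          _ = pVar p g := by
              rw [← Real.rpow_mul hV0, mul_one_div, div_self hp0.ne', Real.rpow_one]
      · exact Real.rpow_nonneg hS0 _
      · exact Real.rpow_nonneg hn0.le _
  have termbound : ∀ t ∈ Finset.range k,
      ‖(n : ℝ)⁻¹ • g (((t : ℝ) + 1) / n) - ∫ v in a t..a (t + 1), g v‖
        ≤ (n : ℝ)⁻¹ * ∫ s in (0 : ℝ)..1, F t s := by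
    intro t ht
    rw [Finset.mem_range] at ht
    have hab : a t ≤ a (t + 1) := by
      simp only [ha]
      rw [div_le_div_iff_of_pos_right hn0]
      exact_mod_cast Nat.le_succ t
    have e0 : (n : ℝ)⁻¹ • g (((t : ℝ) + 1) / n) - ∫ v in a t..a (t + 1), g v
        = ∫ v in a t..a (t + 1), (g (((t : ℝ) + 1) / n) - g v) := by
      rw [intervalIntegral.integral_sub intervalIntegrable_const (hA t ht),
        intervalIntegral.integral_const]
      congr 2
      simp only [ha]
      push_cast
      field_simp
      ring
    rw [e0]
    refine le_trans (intervalIntegral.norm_integral_le_integral_norm hab) ?_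
    have hcv : ∫ s in (0 : ℝ)..1, F t s
        = (n : ℝ) * ∫ v in a t..a (t + 1), ‖g (((t : ℝ) + 1) / n) - g v‖ := by
      have h := intervalIntegral.integral_comp_mul_add
        (fun v => ‖g (((t : ℝ) + 1) / n) - g v‖) (inv_ne_zero hn0.ne') ((t : ℝ) / n)
        (a := 0) (b := 1)
      rw [show (n : ℝ)⁻¹ * 0 + (t : ℝ) / n = a t by simp [ha],
        show (n : ℝ)⁻¹ * 1 + (t : ℝ) / n = a (t + 1) by
          simp only [ha]; push_cast; field_simp; try ring,
        inv_inv, smul_eq_mul] at h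
      rw [← h]
      apply intervalIntegral.integral_congr
      intro s hs
      simp only [hF]
      rw [show (s + (t : ℝ)) / n = (n : ℝ)⁻¹ * s + (t : ℝ) / n by field_simp]
    rw [hcv, ← mul_assoc, inv_mul_cancel₀ hn0.ne', one_mul]
  calc ‖(n : ℝ)⁻¹ • ∑ t ∈ Finset.Icc 1 k, g ((t : ℝ) / n) - ∫ v in (0 : ℝ)..((k : ℝ) / n), g v‖
      = ‖∑ t ∈ Finset.range k,
          ((n : ℝ)⁻¹ • g (((t : ℝ) + 1) / n) - ∫ v in a t..a (t + 1), g v)‖ := by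
        rw [hIcc, ← hsplit, Finset.smul_sum, ← Finset.sum_sub_distrib]
    _ ≤ ∑ t ∈ Finset.range k,
          ‖(n : ℝ)⁻¹ • g (((t : ℝ) + 1) / n) - ∫ v in a t..a (t + 1), g v‖ :=
        norm_sum_le _ _
    _ ≤ ∑ t ∈ Finset.range k, (n : ℝ)⁻¹ * ∫ s in (0 : ℝ)..1, F t s :=
        Finset.sum_le_sum termbound
    _ = (n : ℝ)⁻¹ * ∫ s in (0 : ℝ)..1, ∑ t ∈ Finset.range k, F t s := by
        rw [← Finset.mul_sum, intervalIntegral.integral_finset_sum hFint]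
    _ ≤ (n : ℝ)⁻¹ * ((n : ℝ) ^ ((1 : ℝ) - 1 / p) * pVar p g) := by
        apply mul_le_mul_of_nonneg_left ?_ (by positivity)
        have hsumint : IntervalIntegrable ((Finset.range k).sum F) volume 0 1 :=
          IntervalIntegrable.sum (Finset.range k) hFint
        rw [show (fun s => ∑ t ∈ Finset.range k, F t s) = (Finset.range k).sum F from
          (funext fun s => (Finset.sum_apply s (Finset.range k) F).symm)] at *
        refine le_trans (intervalIntegral.integral_mono_on
          (g := fun _ => (n : ℝ) ^ ((1 : ℝ) - 1 / p) * pVar p g)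
          (by norm_num : (0 : ℝ) ≤ 1) hsumint intervalIntegrable_const ?_) (by simp)
        intro x hx
        simpa [Finset.sum_apply] using claim x hx
    _ = (n : ℝ) ^ (-(1 / p)) * pVar p g := by
        rw [← mul_assoc]
        congr 1
        rw [show ((n : ℝ))⁻¹ = (n : ℝ) ^ (-1 : ℝ) by rw [Real.rpow_neg_one],
          ← Real.rpow_add hn0]
        ring_nf
end

section
/- Let (a_t)_{t=1}^n be a finite sequence in a normed space with ∑_{t=2}^n ‖a_t − a_{t−1}‖^p ≤ V^p for some p ∈ [1, 2] and suppose ‖a_t‖ ≤ B for all t. Then for any lag L with 1 ≤ L < n, (1/n) ∑_{t=L+1}^n ‖a_t − a_{t−L}‖^2 ≤ (2B)^{2−p} · L^p · V^p / n. -/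
open Finset

private lemma powmean {L : ℕ} (hL : 1 ≤ L) {p : ℝ} (hp : 1 ≤ p) (x : ℕ → ℝ)
    (hx : ∀ i, 0 ≤ x i) :
    (∑ i ∈ range L, x i) ^ p ≤ (L : ℝ) ^ (p - 1) * ∑ i ∈ range L, x i ^ p := by
  have hLpos : (0:ℝ) < L := by exact_mod_cast hL
  have key := Real.rpow_arith_mean_le_arith_mean_rpow (range L) (fun _ => 1 / (L:ℝ)) x
    (fun i _ => by positivity) (by rw [Finset.sum_const, Finset.card_range, nsmul_eq_mul, mul_one_div, div_self hLpos.ne'])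
    (fun i _ => hx i) hp
  have h1 : ∑ i ∈ range L, (1 / (L:ℝ)) * x i = (1 / (L:ℝ)) * ∑ i ∈ range L, x i :=
    (Finset.mul_sum _ _ _).symm
  have h2 : ∑ i ∈ range L, (1 / (L:ℝ)) * x i ^ p = (1 / (L:ℝ)) * ∑ i ∈ range L, x i ^ p :=
    (Finset.mul_sum _ _ _).symm
  rw [h1, h2, Real.mul_rpow (by positivity) (Finset.sum_nonneg fun i _ => hx i)] at key
  have hLp : (0:ℝ) < (L:ℝ) ^ p := Real.rpow_pos_of_pos hLpos p
  have hmul := mul_le_mul_of_nonneg_left key hLp.le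
  calc (∑ i ∈ range L, x i) ^ p
      = (L:ℝ) ^ p * ((1/(L:ℝ)) ^ p * (∑ i ∈ range L, x i) ^ p) := by
        rw [← mul_assoc, ← Real.mul_rpow hLpos.le (by positivity)]
        rw [mul_one_div, div_self hLpos.ne', Real.one_rpow, one_mul]
    _ ≤ (L:ℝ) ^ p * ((1/(L:ℝ)) * ∑ i ∈ range L, x i ^ p) := hmul
    _ = (L:ℝ) ^ (p - 1) * ∑ i ∈ range L, x i ^ p := by
        rw [← mul_assoc]
        congr 1
        rw [show p = (p - 1) + 1 by ring, Real.rpow_add hLpos, Real.rpow_one]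
        field_simp
        rw [show p - 1 + 1 - 1 = p - 1 by ring]

/-- Deterministic lag-`L` bias bound, case `p ∈ [1,2]`: if the increments of a bounded
sequence have `p`-variation sum at most `V^p`, then
`(1/n) ∑_{t=L+1}^n ‖a_t − a_{t−L}‖² ≤ (2B)^{2−p} L^p V^p / n`. -/
theorem stmt_5 {E : Type*} [NormedAddCommGroup E] [NormedSpace ℝ E]
    (p V B : ℝ) (hp1 : 1 ≤ p) (hp2 : p ≤ 2) (hV : 0 ≤ V) (hB : 0 ≤ B)
    (n L : ℕ) (hL1 : 1 ≤ L) (hLn : L < n) (a : ℕ → E)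
    (hvar : ∑ t ∈ Finset.Icc 2 n, ‖a t - a (t - 1)‖ ^ p ≤ V ^ p)
    (hbd : ∀ t, 1 ≤ t → t ≤ n → ‖a t‖ ≤ B) :
    (1 / (n : ℝ)) * ∑ t ∈ Finset.Icc (L + 1) n, ‖a t - a (t - L)‖ ^ (2 : ℝ)
      ≤ (2 * B) ^ (2 - p) * (L : ℝ) ^ p * V ^ p / n := by
  have hnpos : (0:ℝ) < n := by
    have : 0 < n := lt_of_le_of_lt (Nat.zero_le L) hLn
    exact_mod_cast this
  have hLpos : (0:ℝ) < L := by exact_mod_cast hL1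
  have hVp : 0 ≤ V ^ p := Real.rpow_nonneg hV p
  have h2B : (0:ℝ) ≤ (2*B) ^ (2-p) := Real.rpow_nonneg (by linarith) _
  have hLpm : (0:ℝ) ≤ (L:ℝ) ^ (p-1) := Real.rpow_nonneg hLpos.le _
  -- per-t bound
  have key : ∀ t ∈ Finset.Icc (L+1) n, ‖a t - a (t - L)‖ ^ (2:ℝ)
      ≤ (2*B) ^ (2-p) * ((L:ℝ) ^ (p-1) * ∑ i ∈ range L, ‖a (t-i) - a (t-i-1)‖ ^ p) := by
    intro t ht
    rw [Finset.mem_Icc] at ht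
    set x := ‖a t - a (t - L)‖ with hxdef
    have hx0 : 0 ≤ x := norm_nonneg _
    have hx2B : x ≤ 2*B := by
      have h1 : ‖a t‖ ≤ B := hbd t (by omega) ht.2
      have h2 : ‖a (t - L)‖ ≤ B := hbd (t - L) (by omega) (by omega)
      calc x ≤ ‖a t‖ + ‖a (t - L)‖ := norm_sub_le _ _
        _ ≤ 2*B := by linarith
    have htel : a t - a (t - L) = ∑ i ∈ range L, (a (t - i) - a (t - i - 1)) := by
      have h := Finset.sum_range_sub' (fun i => a (t - i)) L
      simp only [Nat.sub_zero] at h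
      rw [← h]
      refine Finset.sum_congr rfl fun i _ => ?_
      rw [Nat.sub_sub]
    have hxS : x ≤ ∑ i ∈ range L, ‖a (t - i) - a (t - i - 1)‖ := by
      rw [hxdef, htel]; exact norm_sum_le _ _
    have hS0 : 0 ≤ ∑ i ∈ range L, ‖a (t - i) - a (t - i - 1)‖ :=
      Finset.sum_nonneg fun i _ => norm_nonneg _
    have hsplit : x ^ (2:ℝ) = x ^ (2-p) * x ^ p := by
      rw [← Real.rpow_add_of_nonneg hx0 (by linarith) (by linarith)]
      norm_num
    have h1 : x ^ (2-p) ≤ (2*B) ^ (2-p) :=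
      Real.rpow_le_rpow hx0 hx2B (by linarith)
    have h2 : x ^ p ≤ (L:ℝ) ^ (p-1) * ∑ i ∈ range L, ‖a (t-i) - a (t-i-1)‖ ^ p := by
      calc x ^ p ≤ (∑ i ∈ range L, ‖a (t - i) - a (t - i - 1)‖) ^ p :=
            Real.rpow_le_rpow hx0 hxS (by linarith)
        _ ≤ _ := powmean hL1 hp1 _ (fun i => norm_nonneg _)
    rw [hsplit]
    exact mul_le_mul h1 h2 (Real.rpow_nonneg hx0 p)
      h2B
  -- sum the per-t bounds
  have hsum : ∑ t ∈ Finset.Icc (L+1) n, ‖a t - a (t - L)‖ ^ (2:ℝ)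
      ≤ (2*B) ^ (2-p) * (L:ℝ) ^ p * V ^ p := by
    calc ∑ t ∈ Finset.Icc (L+1) n, ‖a t - a (t - L)‖ ^ (2:ℝ)
        ≤ ∑ t ∈ Finset.Icc (L+1) n,
            (2*B) ^ (2-p) * ((L:ℝ) ^ (p-1) * ∑ i ∈ range L, ‖a (t-i) - a (t-i-1)‖ ^ p) :=
          Finset.sum_le_sum key
      _ = (2*B) ^ (2-p) * ((L:ℝ) ^ (p-1) *
            ∑ i ∈ range L, ∑ t ∈ Finset.Icc (L+1) n, ‖a (t-i) - a (t-i-1)‖ ^ p) := by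
          rw [← Finset.mul_sum, ← Finset.mul_sum, Finset.sum_comm]
      _ ≤ (2*B) ^ (2-p) * ((L:ℝ) ^ (p-1) * ∑ i ∈ range L, V ^ p) := by
          refine mul_le_mul_of_nonneg_left (mul_le_mul_of_nonneg_left
            (Finset.sum_le_sum fun i hi => ?_) hLpm) h2B
          rw [Finset.mem_range] at hi
          -- reindex t ↦ t - i
          have himg : ∑ s ∈ (Finset.Icc (L+1) n).image (· - i), ‖a s - a (s-1)‖ ^ p
              = ∑ t ∈ Finset.Icc (L+1) n, ‖a (t-i) - a (t-i-1)‖ ^ p := by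
            refine Finset.sum_image (f := fun s => ‖a s - a (s-1)‖ ^ p) ?_
            intro s hs u hu h
            simp only [Finset.coe_Icc, Set.mem_Icc, Finset.mem_coe, Finset.mem_Icc] at hs hu
            simp only at h
            omega
          rw [← himg]
          refine le_trans (Finset.sum_le_sum_of_subset_of_nonneg ?_
            fun s _ _ => Real.rpow_nonneg (norm_nonneg _) p) hvar
          intro s hs
          simp only [Finset.mem_image, Finset.mem_Icc] at hs ⊢
          obtain ⟨t, ⟨ht1, ht2⟩, rfl⟩ := hs
          omega
      _ = (2*B) ^ (2-p) * (L:ℝ) ^ p * V ^ p := by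
          rw [Finset.sum_const, Finset.card_range, nsmul_eq_mul]
          have hLL : (L:ℝ) ^ p = (L:ℝ) ^ (p-1) * (L:ℝ) := by
            have h := Real.rpow_add hLpos (p-1) 1
            rw [Real.rpow_one] at h
            rw [show (p-1) + 1 = p from by ring] at h
            exact h
          rw [hLL]; ring
  have hrw : (2*B) ^ (2-p) * (L:ℝ) ^ p * V ^ p / (n:ℝ)
      = (1/(n:ℝ)) * ((2*B) ^ (2-p) * (L:ℝ) ^ p * V ^ p) := by ring
  rw [hrw]
  exact mul_le_mul_of_nonneg_left hsum (by positivity)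
end

section
/- Let (a_t)_{t=0}^n be a finite sequence in a normed space with ∑_{t=1}^n ‖a_t − a_{t−1}‖^p ≤ V^p for some p > 2. Then for any lag L with 1 ≤ L ≤ n, (1/n) ∑_{t=L}^n ‖a_t − a_{t−L}‖^2 ≤ L^2 · n^{−2/p} · V^2. -/
open Finset

/-- Deterministic lag-`L` bias bound, case `p > 2`: if the increments of a sequence have
`p`-variation sum at most `V^p`, then `(1/n) ∑_{t=L}^n ‖a_t − a_{t−L}‖² ≤ L² n^{−2/p} V²`. -/
theorem stmt_6 {E : Type*} [NormedAddCommGroup E] [NormedSpace ℝ E]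
    (p V : ℝ) (hp : 2 < p) (hV : 0 ≤ V)
    (n L : ℕ) (hL1 : 1 ≤ L) (hLn : L ≤ n) (a : ℕ → E)
    (hvar : ∑ t ∈ Finset.Icc 1 n, ‖a t - a (t - 1)‖ ^ p ≤ V ^ p) :
    (1 / (n : ℝ)) * ∑ t ∈ Finset.Icc L n, ‖a t - a (t - L)‖ ^ (2 : ℝ)
      ≤ (L : ℝ) ^ (2 : ℝ) * (n : ℝ) ^ (-(2 / p)) * V ^ (2 : ℝ) := by
  have hn1 : 1 ≤ n := hL1.trans hLn
  have hn0 : (0 : ℝ) < n := by exact_mod_cast Nat.lt_of_lt_of_le Nat.zero_lt_one hn1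
  set d : ℕ → ℝ := fun j => ‖a j - a (j - 1)‖ with hd
  have hd0 : ∀ j, 0 ≤ d j := fun j => norm_nonneg _
  have hp0 : 0 < p := by linarith
  -- Step A: triangle inequality over L steps
  have hA : ∀ t, L ≤ t → ‖a t - a (t - L)‖ ≤ ∑ j ∈ Finset.Icc (t - L + 1) t, d j := by
    intro t ht
    have htel := dist_le_range_sum_dist (fun i => a (t - L + i)) L
    have ht' : t - L + L = t := Nat.sub_add_cancel ht
    have h1 : ‖a t - a (t - L)‖ ≤ ∑ i ∈ Finset.range L, d (t - L + i + 1) := by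
      calc ‖a t - a (t - L)‖ = dist (a (t - L + 0)) (a (t - L + L)) := by
            rw [Nat.add_zero, ht', dist_eq_norm, norm_sub_rev]
        _ ≤ ∑ i ∈ Finset.range L, dist (a (t - L + i)) (a (t - L + (i + 1))) := htel
        _ = ∑ i ∈ Finset.range L, d (t - L + i + 1) := by
            refine Finset.sum_congr rfl fun i _ => ?_
            rw [dist_eq_norm, norm_sub_rev, hd]
            have e1 : t - L + (i + 1) = t - L + i + 1 := by omega
            have e2 : t - L + i + 1 - 1 = t - L + i := by omega
            simp [e1, e2]
    have h2 : ∑ i ∈ Finset.range L, d (t - L + i + 1)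
        = ∑ j ∈ Finset.Icc (t - L + 1) t, d j := by
      refine Finset.sum_nbij' (fun i => t - L + i + 1) (fun j => j - (t - L + 1)) ?_ ?_ ?_ ?_ ?_
      · intro i hi; simp only [Finset.mem_range] at hi; simp only [Finset.mem_Icc]; omega
      · intro j hj; simp only [Finset.mem_Icc] at hj; simp only [Finset.mem_range]; omega
      · intro i hi; simp only [Finset.mem_range] at hi; omega
      · intro j hj; simp only [Finset.mem_Icc] at hj; omega
      · intro i _; rfl
    rw [← h2]; exact h1
  -- Step A': squared version, via Cauchy-Schwarz
  have hA2 : ∀ t ∈ Finset.Icc L n, ‖a t - a (t - L)‖ ^ 2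
      ≤ (L : ℝ) * ∑ j ∈ Finset.Icc (t - L + 1) t, d j ^ 2 := by
    intro t ht
    simp only [Finset.mem_Icc] at ht
    have h1 : ‖a t - a (t - L)‖ ^ 2 ≤ (∑ j ∈ Finset.Icc (t - L + 1) t, d j) ^ 2 :=
      pow_le_pow_left₀ (norm_nonneg _) (hA t ht.1) 2
    have hcard : #(Finset.Icc (t - L + 1) t) = L := by
      rw [Nat.card_Icc]; omega
    calc ‖a t - a (t - L)‖ ^ 2 ≤ (∑ j ∈ Finset.Icc (t - L + 1) t, d j) ^ 2 := h1
      _ ≤ #(Finset.Icc (t - L + 1) t) * ∑ j ∈ Finset.Icc (t - L + 1) t, d j ^ 2 :=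
          sq_sum_le_card_mul_sum_sq
      _ = (L : ℝ) * ∑ j ∈ Finset.Icc (t - L + 1) t, d j ^ 2 := by rw [hcard]
  -- Step B: double counting
  have hB : ∑ t ∈ Finset.Icc L n, ∑ j ∈ Finset.Icc (t - L + 1) t, d j ^ 2
      ≤ (L : ℝ) * ∑ j ∈ Finset.Icc 1 n, d j ^ 2 := by
    have key : ∀ t ∈ Finset.Icc L n, ∑ j ∈ Finset.Icc (t - L + 1) t, d j ^ 2
        = ∑ j ∈ Finset.Icc 1 n, if j ∈ Finset.Icc (t - L + 1) t then d j ^ 2 else 0 := by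
      intro t ht
      simp only [Finset.mem_Icc] at ht
      rw [Finset.sum_ite_mem, Finset.inter_eq_right.mpr]
      intro j hj
      simp only [Finset.mem_Icc] at hj ⊢
      omega
    rw [Finset.sum_congr rfl key, Finset.sum_comm, Finset.mul_sum]
    refine Finset.sum_le_sum fun j _ => ?_
    have hfil : ∑ t ∈ Finset.Icc L n, (if j ∈ Finset.Icc (t - L + 1) t then d j ^ 2 else 0)
        = #((Finset.Icc L n).filter (fun t => j ∈ Finset.Icc (t - L + 1) t)) * d j ^ 2 := by
      rw [Finset.sum_filter _ (fun _ => d j ^ 2) |>.symm, Finset.sum_const, nsmul_eq_mul]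
    rw [hfil]
    have hsub : (Finset.Icc L n).filter (fun t => j ∈ Finset.Icc (t - L + 1) t)
        ⊆ Finset.Ico j (j + L) := by
      intro t ht
      simp only [Finset.mem_filter, Finset.mem_Icc, Finset.mem_Ico] at ht ⊢
      omega
    have hcard : (#((Finset.Icc L n).filter (fun t => j ∈ Finset.Icc (t - L + 1) t)) : ℝ)
        ≤ (L : ℝ) := by
      have := Finset.card_le_card hsub
      rw [Nat.card_Ico] at this
      exact_mod_cast le_trans this (by omega)
    exact mul_le_mul_of_nonneg_right hcard (by positivity)
  -- Step C: Hölder's inequality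
  have hC : ∑ j ∈ Finset.Icc 1 n, d j ^ 2 ≤ (n : ℝ) ^ (1 - 2 / p) * V ^ (2 : ℝ) := by
    have hr : 1 ≤ p / 2 := by rw [le_div_iff₀ (by norm_num : (0:ℝ) < 2)]; linarith
    have hhold := Real.inner_le_weight_mul_Lp_of_nonneg (Finset.Icc 1 n) hr
      (fun _ => (1 : ℝ)) (fun j => d j ^ 2) (fun _ => zero_le_one) (fun j => by positivity)
    simp only [one_mul, Finset.sum_const, nsmul_eq_mul, mul_one, Nat.card_Icc,
      Nat.add_sub_cancel] at hhold
    have hpow : ∀ j ∈ Finset.Icc 1 n, ((d j ^ 2 : ℝ)) ^ (p / 2) = d j ^ p := by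
      intro j _
      rw [← Real.rpow_natCast (d j) 2, ← Real.rpow_mul (hd0 j)]
      norm_num
      rw [mul_div_cancel₀ _ (by norm_num : (2:ℝ) ≠ 0)]
    rw [Finset.sum_congr rfl hpow] at hhold
    have h1 : (∑ j ∈ Finset.Icc 1 n, d j ^ p) ^ (p / 2)⁻¹ ≤ (V ^ p) ^ (p / 2)⁻¹ :=
      Real.rpow_le_rpow (Finset.sum_nonneg fun j _ => Real.rpow_nonneg (hd0 j) p)
        hvar (by positivity)
    have h2 : (V ^ p) ^ (p / 2)⁻¹ = V ^ (2 : ℝ) := by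
      rw [← Real.rpow_mul hV]
      congr 1
      field_simp
    have h3 : 1 - (p / 2)⁻¹ = 1 - 2 / p := by rw [inv_div]
    rw [h3] at hhold
    calc ∑ j ∈ Finset.Icc 1 n, d j ^ 2
        ≤ (n : ℝ) ^ (1 - 2 / p) * (∑ j ∈ Finset.Icc 1 n, d j ^ p) ^ (p / 2)⁻¹ := hhold
      _ ≤ (n : ℝ) ^ (1 - 2 / p) * V ^ (2 : ℝ) := by
          rw [← h2]
          exact mul_le_mul_of_nonneg_left h1 (Real.rpow_nonneg hn0.le _)
  -- Assembly
  have hS : ∑ t ∈ Finset.Icc L n, ‖a t - a (t - L)‖ ^ (2 : ℝ)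
      ≤ (L : ℝ) ^ 2 * ((n : ℝ) ^ (1 - 2 / p) * V ^ (2 : ℝ)) := by
    calc ∑ t ∈ Finset.Icc L n, ‖a t - a (t - L)‖ ^ (2 : ℝ)
        = ∑ t ∈ Finset.Icc L n, ‖a t - a (t - L)‖ ^ 2 :=
          Finset.sum_congr rfl fun t _ => Real.rpow_two _
      _ ≤ ∑ t ∈ Finset.Icc L n, (L : ℝ) * ∑ j ∈ Finset.Icc (t - L + 1) t, d j ^ 2 :=
          Finset.sum_le_sum hA2
      _ = (L : ℝ) * ∑ t ∈ Finset.Icc L n, ∑ j ∈ Finset.Icc (t - L + 1) t, d j ^ 2 := by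
          rw [Finset.mul_sum]
      _ ≤ (L : ℝ) * ((L : ℝ) * ∑ j ∈ Finset.Icc 1 n, d j ^ 2) :=
          mul_le_mul_of_nonneg_left hB (by positivity)
      _ ≤ (L : ℝ) * ((L : ℝ) * ((n : ℝ) ^ (1 - 2 / p) * V ^ (2 : ℝ))) :=
          mul_le_mul_of_nonneg_left (mul_le_mul_of_nonneg_left hC (by positivity)) (by positivity)
      _ = (L : ℝ) ^ 2 * ((n : ℝ) ^ (1 - 2 / p) * V ^ (2 : ℝ)) := by ring
  have hsplit : (n : ℝ) ^ (1 - 2 / p) = (n : ℝ) * (n : ℝ) ^ (-(2 / p)) := by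
    have : (1 : ℝ) - 2 / p = 1 + -(2 / p) := by ring
    rw [this, Real.rpow_add hn0, Real.rpow_one]
  calc (1 / (n : ℝ)) * ∑ t ∈ Finset.Icc L n, ‖a t - a (t - L)‖ ^ (2 : ℝ)
      ≤ (1 / (n : ℝ)) * ((L : ℝ) ^ 2 * ((n : ℝ) ^ (1 - 2 / p) * V ^ (2 : ℝ))) :=
        mul_le_mul_of_nonneg_left hS (by positivity)
    _ = (L : ℝ) ^ (2 : ℝ) * (n : ℝ) ^ (-(2 / p)) * V ^ (2 : ℝ) := by
        rw [hsplit, Real.rpow_two (L : ℝ)]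
        field_simp
end

section
/- Let A_i ∈ ℝ^{d×d}, i ∈ ℕ, be matrices with ‖A_i‖ ≤ A* < ∞ (operator norm), spectral radius ρ(A_i) ≤ ρ_0 < 1 for all i, and sequence p-variation sup over increasing index sequences 1 ≤ i_1 < i_2 < … of (∑_k ‖A_{i_{k+1}} − A_{i_k}‖^p)^{1/p} ≤ A* for some p ≥ 1. Then for every ρ ∈ (ρ_0, 1) there exists a constant K = K(ρ, ρ_0, A*) such that ‖∏_{i=s+1}^t A_i‖ ≤ K ρ^{t−s} for all integers 0 ≤ s < t, where the product is taken in order A_{s+1} A_{s+2} ⋯ A_t. -/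
open Matrix Finset

/-- Euclidean operator norm of a real square matrix. -/
noncomputable def matOpNorm {d : ℕ} (A : Matrix (Fin d) (Fin d) ℝ) : ℝ :=
  ‖Matrix.toEuclideanCLM (𝕜 := ℝ) A‖

/-- Spectral radius of a real square matrix: the maximal modulus of its complex eigenvalues. -/
noncomputable def specRad {d : ℕ} (A : Matrix (Fin d) (Fin d) ℝ) : ℝ :=
  ⨆ z ∈ spectrum ℂ (A.map (algebraMap ℝ ℂ)), ‖z‖

/-- The ordered product `A_{s+1} A_{s+2} ⋯ A_t`. -/
noncomputable def matProd {d : ℕ} (A : ℕ → Matrix (Fin d) (Fin d) ℝ) (s t : ℕ) :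
    Matrix (Fin d) (Fin d) ℝ :=
  ((List.range (t - s)).map (fun k => A (s + 1 + k))).prod

section EntryNorm
variable {d : ℕ} {𝕜 : Type*} [RCLike 𝕜]

lemma euclid_entry_le (v : EuclideanSpace 𝕜 (Fin d)) (i : Fin d) : ‖v i‖ ≤ ‖v‖ := by
  rw [EuclideanSpace.norm_eq]
  have h1 : ‖v i‖ = Real.sqrt (‖v i‖ ^ 2) := by
    rw [Real.sqrt_sq (norm_nonneg _)]
  rw [h1]
  apply Real.sqrt_le_sqrt
  exact Finset.single_le_sum (f := fun j => ‖v j‖ ^ 2) (fun j _ => sq_nonneg _) (mem_univ i)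

lemma euclid_norm_le_sum (v : EuclideanSpace 𝕜 (Fin d)) : ‖v‖ ≤ ∑ i, ‖v i‖ := by
  rw [EuclideanSpace.norm_eq]
  have h2 : ∑ i, ‖v i‖ ^ 2 ≤ (∑ i, ‖v i‖) ^ 2 := by
    rw [sq (∑ i, ‖v i‖), Finset.sum_mul_sum]
    calc ∑ i, ‖v i‖ ^ 2 = ∑ i, ∑ j, (if j = i then ‖v i‖ ^ 2 else 0) := by
          simp
      _ ≤ ∑ i, ∑ j, ‖v i‖ * ‖v j‖ := by
          apply Finset.sum_le_sum; intro i _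
          apply Finset.sum_le_sum; intro j _
          by_cases h : j = i
          · subst h; rw [if_pos rfl, sq]
          · simp only [h, if_false]
            positivity
  calc Real.sqrt (∑ i, ‖v i‖ ^ 2) ≤ Real.sqrt ((∑ i, ‖v i‖) ^ 2) := Real.sqrt_le_sqrt h2
    _ = ∑ i, ‖v i‖ := Real.sqrt_sq (by positivity)

lemma clm_apply_entry (M : Matrix (Fin d) (Fin d) 𝕜) (x : EuclideanSpace 𝕜 (Fin d)) (i : Fin d) :
    (Matrix.toEuclideanCLM (𝕜 := 𝕜) M x) i = ∑ j, M i j * x j := by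
  have h := Matrix.ofLp_toEuclideanCLM (n := Fin d) (𝕜 := 𝕜) M x
  calc (Matrix.toEuclideanCLM (𝕜 := 𝕜) M x) i
      = (M *ᵥ x.ofLp) i := congrFun h i
    _ = ∑ j, M i j * x j := by
        simp [Matrix.mulVec, dotProduct]

lemma entry_le_clm (M : Matrix (Fin d) (Fin d) 𝕜) (i j : Fin d) :
    ‖M i j‖ ≤ ‖Matrix.toEuclideanCLM (𝕜 := 𝕜) M‖ := by
  classical
  set x : EuclideanSpace 𝕜 (Fin d) := EuclideanSpace.single j 1
  have hx : ‖x‖ = 1 := by simp [x, EuclideanSpace.norm_single]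
  have happ : (Matrix.toEuclideanCLM (𝕜 := 𝕜) M x) i = M i j := by
    rw [clm_apply_entry]
    have : ∀ k, x k = if k = j then 1 else 0 := fun k => EuclideanSpace.single_apply j 1 k
    simp only [this, mul_ite, mul_one, mul_zero]
    simp
  calc ‖M i j‖ = ‖(Matrix.toEuclideanCLM (𝕜 := 𝕜) M x) i‖ := by rw [happ]
    _ ≤ ‖Matrix.toEuclideanCLM (𝕜 := 𝕜) M x‖ := euclid_entry_le _ i
    _ ≤ ‖Matrix.toEuclideanCLM (𝕜 := 𝕜) M‖ * ‖x‖ := ContinuousLinearMap.le_opNorm _ _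
    _ = ‖Matrix.toEuclideanCLM (𝕜 := 𝕜) M‖ := by rw [hx, mul_one]

lemma clm_le_sum_entries (M : Matrix (Fin d) (Fin d) 𝕜) :
    ‖Matrix.toEuclideanCLM (𝕜 := 𝕜) M‖ ≤ ∑ i, ∑ j, ‖M i j‖ := by
  apply ContinuousLinearMap.opNorm_le_bound _ (by positivity)
  intro x
  calc ‖Matrix.toEuclideanCLM (𝕜 := 𝕜) M x‖
      ≤ ∑ i, ‖(Matrix.toEuclideanCLM (𝕜 := 𝕜) M x) i‖ := euclid_norm_le_sum _
    _ ≤ ∑ i, ∑ j, ‖M i j‖ * ‖x‖ := by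
        apply Finset.sum_le_sum; intro i _
        rw [clm_apply_entry]
        calc ‖∑ j, M i j * x j‖ ≤ ∑ j, ‖M i j * x j‖ := norm_sum_le _ _
          _ ≤ ∑ j, ‖M i j‖ * ‖x‖ := by
              apply Finset.sum_le_sum; intro j _
              rw [norm_mul]
              exact mul_le_mul_of_nonneg_left (euclid_entry_le x j) (norm_nonneg _)
    _ = (∑ i, ∑ j, ‖M i j‖) * ‖x‖ := by rw [Finset.sum_mul]; congr 1; ext i; rw [Finset.sum_mul]

end EntryNorm

noncomputable section Phi
variable {d : ℕ}

/-- Complexification composed with CLM representation. -/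
def PhiC (M : Matrix (Fin d) (Fin d) ℝ) :
    EuclideanSpace ℂ (Fin d) →L[ℂ] EuclideanSpace ℂ (Fin d) :=
  Matrix.toEuclideanCLM (𝕜 := ℂ) (M.map (algebraMap ℝ ℂ))

lemma PhiC_mul (M N : Matrix (Fin d) (Fin d) ℝ) : PhiC (M * N) = PhiC M * PhiC N := by
  unfold PhiC
  rw [Matrix.map_mul, _root_.map_mul]

lemma PhiC_sub (M N : Matrix (Fin d) (Fin d) ℝ) : PhiC (M - N) = PhiC M - PhiC N := by
  unfold PhiC
  rw [Matrix.map_sub _ (fun a b => map_sub (algebraMap ℝ ℂ) a b), _root_.map_sub]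

lemma PhiC_norm_le (M : Matrix (Fin d) (Fin d) ℝ) :
    ‖PhiC M‖ ≤ (d : ℝ) ^ 2 * matOpNorm M := by
  calc ‖PhiC M‖ ≤ ∑ i, ∑ j, ‖(M.map (algebraMap ℝ ℂ)) i j‖ := clm_le_sum_entries _
    _ = ∑ i : Fin d, ∑ j : Fin d, ‖M i j‖ := by
        congr 1; ext i; congr 1; ext j
        simp [Matrix.map_apply, Complex.norm_real]
    _ ≤ ∑ _i : Fin d, ∑ _j : Fin d, matOpNorm M := by
        apply Finset.sum_le_sum; intro i _
        apply Finset.sum_le_sum; intro j _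
        exact entry_le_clm M i j
    _ = (d : ℝ) ^ 2 * matOpNorm M := by
        rw [Finset.sum_const, Finset.sum_const, Finset.card_univ, Fintype.card_fin,
          nsmul_eq_mul, nsmul_eq_mul]
        ring

lemma matOpNorm_le_PhiC (M : Matrix (Fin d) (Fin d) ℝ) :
    matOpNorm M ≤ (d : ℝ) ^ 2 * ‖PhiC M‖ := by
  calc matOpNorm M ≤ ∑ i, ∑ j, ‖M i j‖ := clm_le_sum_entries _
    _ ≤ ∑ _i : Fin d, ∑ _j : Fin d, ‖PhiC M‖ := by
        apply Finset.sum_le_sum; intro i _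
        apply Finset.sum_le_sum; intro j _
        calc ‖M i j‖ = ‖(M.map (algebraMap ℝ ℂ)) i j‖ := by
              simp [Matrix.map_apply, Complex.norm_real]
          _ ≤ ‖PhiC M‖ := entry_le_clm _ i j
    _ = (d : ℝ) ^ 2 * ‖PhiC M‖ := by
        rw [Finset.sum_const, Finset.sum_const, Finset.card_univ, Fintype.card_fin,
          nsmul_eq_mul, nsmul_eq_mul]
        ring

end Phi

section ListProd
variable {d : ℕ}

local notation "Ed" => (EuclideanSpace ℂ (Fin d) →L[ℂ] EuclideanSpace ℂ (Fin d))

lemma list_prod_norm_le (M : ℝ) (hM0 : 0 ≤ M) :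
    ∀ l : List Ed, (∀ x ∈ l, ‖x‖ ≤ M) → ‖l.prod‖ ≤ M ^ l.length := by
  intro l
  induction l with
  | nil =>
      intro _
      rw [List.prod_nil, List.length_nil, pow_zero]
      exact ContinuousLinearMap.norm_id_le
  | cons x xs ih =>
      intro h
      rw [List.prod_cons, List.length_cons, pow_succ']
      calc ‖x * xs.prod‖ ≤ ‖x‖ * ‖xs.prod‖ := norm_mul_le _ _
        _ ≤ M * M ^ xs.length := by
            apply mul_le_mul (h x (List.mem_cons_self)) (ih fun y hy => h y (List.mem_cons_of_mem _ hy))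
              (norm_nonneg _) hM0

lemma range_prod_norm_le (f : ℕ → Ed) (n : ℕ) (M : ℝ) (hM0 : 0 ≤ M)
    (h : ∀ k < n, ‖f k‖ ≤ M) : ‖((List.range n).map f).prod‖ ≤ M ^ n := by
  have := list_prod_norm_le M hM0 ((List.range n).map f) ?_
  · rw [List.length_map, List.length_range] at this
    exact this
  · intro x hx
    rw [List.mem_map] at hx
    obtain ⟨k, hk, rfl⟩ := hx
    exact h k (List.mem_range.mp hk)

lemma range_prod_sub (f g : ℕ → Ed) (M δ : ℝ) (hM : 1 ≤ M) (hδ : 0 ≤ δ) :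
    ∀ n : ℕ, (∀ k < n, ‖f k‖ ≤ M) → (∀ k < n, ‖g k‖ ≤ M) → (∀ k < n, ‖f k - g k‖ ≤ δ) →
    ‖((List.range n).map f).prod - ((List.range n).map g).prod‖ ≤ n * M ^ n * δ := by
  have hM0 : (0:ℝ) ≤ M := le_trans zero_le_one hM
  intro n
  induction n with
  | zero =>
      intro _ _ _
      rw [List.range_zero]
      simp only [List.map_nil, List.prod_nil, sub_self, norm_zero, Nat.cast_zero, zero_mul]
      norm_num
  | succ n ih =>
      intro hf hg hfg
      have hfn : ∀ k < n, ‖f k‖ ≤ M := fun k hk => hf k (Nat.lt_succ_of_lt hk)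
      have hgn : ∀ k < n, ‖g k‖ ≤ M := fun k hk => hg k (Nat.lt_succ_of_lt hk)
      have hfgn : ∀ k < n, ‖f k - g k‖ ≤ δ := fun k hk => hfg k (Nat.lt_succ_of_lt hk)
      have hrw : ∀ h : ℕ → Ed, ((List.range (n+1)).map h).prod
          = ((List.range n).map h).prod * h n := by
        intro h
        rw [List.range_succ, List.map_append, List.prod_append]
        simp
      rw [hrw f, hrw g]
      have key : ((List.range n).map f).prod * f n - ((List.range n).map g).prod * g n
          = (((List.range n).map f).prod - ((List.range n).map g).prod) * f n
            + ((List.range n).map g).prod * (f n - g n) := by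
        rw [sub_mul, mul_sub]
        abel
      rw [key]
      have h1 : ‖(((List.range n).map f).prod - ((List.range n).map g).prod) * f n‖
          ≤ (n * M ^ n * δ) * M := by
        calc ‖_ * f n‖ ≤ ‖((List.range n).map f).prod - ((List.range n).map g).prod‖ * ‖f n‖ :=
              norm_mul_le _ _
          _ ≤ (n * M ^ n * δ) * M := by
              apply mul_le_mul (ih hfn hgn hfgn) (hf n (Nat.lt_succ_self n)) (norm_nonneg _)
              positivity
      have h2 : ‖((List.range n).map g).prod * (f n - g n)‖ ≤ M ^ n * δ := by
        calc ‖_ * (f n - g n)‖ ≤ ‖((List.range n).map g).prod‖ * ‖f n - g n‖ := norm_mul_le _ _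
          _ ≤ M ^ n * δ := by
              apply mul_le_mul (range_prod_norm_le g n M hM0 hgn) (hfg n (Nat.lt_succ_self n))
                (norm_nonneg _) (by positivity)
      calc ‖_ + _‖ ≤ (n * M ^ n * δ) * M + M ^ n * δ := norm_add_le_of_le h1 h2
        _ ≤ (n+1 : ℕ) * M ^ (n+1) * δ := by
            push_cast
            have hpow : M ^ n ≤ M ^ (n+1) := by
              calc M ^ n = M ^ n * 1 := by ring
                _ ≤ M ^ n * M := mul_le_mul_of_nonneg_left hM (by positivity)
                _ = M ^ (n+1) := by ring
            have e1 : (n:ℝ) * M ^ n * δ * M = (n:ℝ) * M ^ (n+1) * δ := by ring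
            rw [e1]
            have e2 : M ^ n * δ ≤ M ^ (n+1) * δ := mul_le_mul_of_nonneg_right hpow hδ
            calc (n:ℝ) * M ^ (n+1) * δ + M ^ n * δ ≤ (n:ℝ) * M ^ (n+1) * δ + M ^ (n+1) * δ := by
                  linarith
              _ = ((n:ℝ)+1) * M ^ (n+1) * δ := by ring

lemma range_prod_split (b : ℕ → Ed) (u m v : ℕ) (hum : u ≤ m) (hmv : m ≤ v) :
    ((List.range (v-u)).map (fun k => b (u+1+k))).prod
      = ((List.range (m-u)).map (fun k => b (u+1+k))).prod
        * ((List.range (v-m)).map (fun k => b (m+1+k))).prod := by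
  have hsplit : v - u = (m - u) + (v - m) := by omega
  rw [hsplit, List.range_add, List.map_append, List.prod_append]
  congr 1
  rw [List.map_map]
  refine congrArg List.prod ?_
  apply List.map_congr_left
  intro k hk
  simp only [Function.comp_apply]
  congr 1
  omega

end ListProd

section Spectral
open Polynomial Filter Topology
variable {d : ℕ}

lemma abs_le_specRad (M : Matrix (Fin d) (Fin d) ℝ) {z : ℂ}
    (hz : z ∈ spectrum ℂ (M.map (algebraMap ℝ ℂ))) : ‖z‖ ≤ specRad M := by
  set S := spectrum ℂ (M.map (algebraMap ℝ ℂ)) with hSdef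
  have hS : S = spectrum ℂ (Matrix.toEuclideanCLM (𝕜 := ℂ) (M.map (algebraMap ℝ ℂ))) :=
    (AlgEquiv.spectrum_eq (Matrix.toEuclideanCLM (𝕜 := ℂ)) _).symm
  have hcpt : IsCompact S := by rw [hS]; exact spectrum.isCompact _
  obtain ⟨R, hR⟩ := (hcpt.image continuous_norm).bddAbove
  have hRmem : ∀ w ∈ S, ‖w‖ ≤ R := fun w hw => hR (Set.mem_image_of_mem _ hw)
  have hbdd : BddAbove (Set.range fun w : ℂ => ⨆ _ : w ∈ S, ‖w‖) := by
    refine ⟨max R 0, ?_⟩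
    rintro x ⟨w, rfl⟩
    by_cases hw : w ∈ S
    · show (⨆ _ : w ∈ S, ‖w‖) ≤ max R 0
      rw [ciSup_pos hw]
      exact le_max_of_le_left (hRmem w hw)
    · show (⨆ _ : w ∈ S, ‖w‖) ≤ max R 0
      haveI : IsEmpty (w ∈ S) := isEmpty_Prop.mpr hw
      rw [Real.iSup_of_isEmpty]
      exact le_max_right _ _
  have h1 : (⨆ _ : z ∈ S, ‖z‖) = ‖z‖ := ciSup_pos hz
  calc ‖z‖ = (⨆ _ : z ∈ S, ‖z‖) := h1.symm
    _ ≤ specRad M := by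
        rw [specRad, ← hSdef]
        exact le_ciSup hbdd z

lemma charpoly_eval_eq (B : Matrix (Fin d) (Fin d) ℂ) (z : ℂ) :
    B.charpoly.eval z = (Matrix.scalar (Fin d) z - B).det := by
  rw [Matrix.charpoly, _root_.eval_det, Matrix.matPolyEquiv_charmatrix,
    Polynomial.eval_sub, Polynomial.eval_X, Polynomial.eval_C]

lemma scalar_eq_algebraMap (z : ℂ) :
    Matrix.scalar (Fin d) z = algebraMap ℂ (Matrix (Fin d) (Fin d) ℂ) z := by
  rw [Matrix.scalar_apply, Matrix.algebraMap_eq_diagonal]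
  rfl

lemma mem_spectrum_iff_det (B : Matrix (Fin d) (Fin d) ℂ) (z : ℂ) :
    z ∈ spectrum ℂ B ↔ (Matrix.scalar (Fin d) z - B).det = 0 := by
  rw [spectrum.mem_iff, ← scalar_eq_algebraMap]
  constructor
  · intro h
    by_contra hd
    exact h ((Matrix.isUnit_iff_isUnit_det _).mpr (isUnit_iff_ne_zero.mpr hd))
  · intro h hu
    have := (Matrix.isUnit_iff_isUnit_det _).mp hu
    rw [h] at this
    exact (not_isUnit_zero : ¬ IsUnit (0:ℂ)) this

lemma multiset_prod_lower (m : ℝ) (hm : 0 ≤ m) :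
    ∀ s : Multiset ℝ, (∀ x ∈ s, m ≤ x) → m ^ (Multiset.card s) ≤ s.prod := by
  intro s
  induction s using Multiset.induction_on with
  | empty => intro _; simp
  | cons a s ih =>
      intro h
      rw [Multiset.prod_cons, Multiset.card_cons, pow_succ']
      have ha : m ≤ a := h a (Multiset.mem_cons_self a s)
      have hs : m ^ (Multiset.card s) ≤ s.prod := ih fun x hx => h x (Multiset.mem_cons_of_mem hx)
      exact mul_le_mul ha hs (pow_nonneg hm _) (le_trans hm ha)

lemma charpoly_eval_lower (ρ₀ : ℝ) (B : Matrix (Fin d) (Fin d) ℂ)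
    (hB : ∀ w ∈ spectrum ℂ B, ‖w‖ ≤ ρ₀) (z : ℂ) (hz : ρ₀ < ‖z‖) :
    (min 1 (‖z‖ - ρ₀)) ^ d ≤ ‖B.charpoly.eval z‖ := by
  set m := min 1 (‖z‖ - ρ₀) with hmdef
  have hm0 : 0 < m := lt_min one_pos (by linarith)
  have hmonic := B.charpoly_monic
  have hsplits : B.charpoly.Splits := IsAlgClosed.splits _
  have hfact := hsplits.eq_prod_roots_of_monic hmonic
  have heval : B.charpoly.eval z
      = ((B.charpoly.roots.map fun a => z - a)).prod := by
    conv_lhs => rw [hfact]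
    rw [Polynomial.eval_multiset_prod, Multiset.map_map]
    congr 1
    apply Multiset.map_congr rfl
    intro a _
    simp [Polynomial.eval_sub]
  rw [heval, (map_multiset_prod (normHom : ℂ →*₀ ℝ) _ : ‖_‖ = _)]
  rw [Multiset.map_map]
  have hroots : ∀ a ∈ B.charpoly.roots, m ≤ ‖z - a‖ := by
    intro a ha
    have haroot : B.charpoly.IsRoot a := (Polynomial.mem_roots (hmonic.ne_zero)).mp ha
    have haspec : a ∈ spectrum ℂ B := by
      rw [mem_spectrum_iff_det]
      rw [← charpoly_eval_eq]
      exact haroot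
    have haabs : ‖a‖ ≤ ρ₀ := hB a haspec
    have : ‖z‖ - ‖a‖ ≤ ‖z - a‖ := by
      have := norm_sub_norm_le z a
      simpa using this
    calc m ≤ ‖z‖ - ρ₀ := min_le_right _ _
      _ ≤ ‖z‖ - ‖a‖ := by linarith
      _ ≤ ‖z - a‖ := this
  have hcard : Multiset.card (B.charpoly.roots.map fun a => ‖z - a‖)
      ≤ d := by
    rw [Multiset.card_map]
    calc Multiset.card B.charpoly.roots ≤ B.charpoly.natDegree := Polynomial.card_roots' _
      _ = d := by rw [Matrix.charpoly_natDegree_eq_dim, Fintype.card_fin]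
  have hlow := multiset_prod_lower m hm0.le (B.charpoly.roots.map fun a => ‖z - a‖) ?_
  · calc m ^ d ≤ m ^ (Multiset.card (B.charpoly.roots.map fun a => ‖z - a‖)) :=
        pow_le_pow_of_le_one hm0.le (min_le_left _ _) hcard
      _ ≤ _ := hlow
  · intro x hx
    rw [Multiset.mem_map] at hx
    obtain ⟨a, ha, rfl⟩ := hx
    exact hroots a ha

lemma spec_limit (ρ₀ : ℝ) (B : ℕ → Matrix (Fin d) (Fin d) ℂ) (C : Matrix (Fin d) (Fin d) ℂ)
    (hB : ∀ i, ∀ w ∈ spectrum ℂ (B i), ‖w‖ ≤ ρ₀)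
    (hconv : ∀ k l, Tendsto (fun i => B i k l) atTop (𝓝 (C k l))) :
    ∀ z ∈ spectrum ℂ C, ‖z‖ ≤ ρ₀ := by
  intro z hz
  by_contra hlt
  push_neg at hlt
  set m := min 1 (‖z‖ - ρ₀) with hmdef
  have hm0 : 0 < m := lt_min one_pos (by linarith)
  have htend : Tendsto (fun i => (Matrix.scalar (Fin d) z - B i).det) atTop
      (𝓝 ((Matrix.scalar (Fin d) z - C).det)) := by
    simp only [Matrix.det_apply']
    apply tendsto_finset_sum
    intro σ _
    apply Filter.Tendsto.const_mul
    apply tendsto_finset_prod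
    intro k _
    simp only [Matrix.sub_apply]
    exact Filter.Tendsto.const_sub _ (hconv (σ k) k)
  have hdet0 : (Matrix.scalar (Fin d) z - C).det = 0 := (mem_spectrum_iff_det C z).mp hz
  rw [hdet0] at htend
  have habs : Tendsto (fun i => ‖(Matrix.scalar (Fin d) z - B i).det‖) atTop (𝓝 0) := by
    have := (continuous_norm.tendsto 0).comp htend
    simpa [Function.comp_def] using this
  have hlb : ∀ i, m ^ d ≤ ‖(Matrix.scalar (Fin d) z - B i).det‖ := by
    intro i
    rw [← charpoly_eval_eq]
    exact charpoly_eval_lower ρ₀ (B i) (hB i) z hlt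
  have : m ^ d ≤ 0 := ge_of_tendsto' habs hlb
  have : (0:ℝ) < m ^ d := pow_pos hm0 d
  linarith

end Spectral

section Gelfand
open Filter Topology ENNReal
variable {d : ℕ}

lemma exists_good_power (L : EuclideanSpace ℂ (Fin d) →L[ℂ] EuclideanSpace ℂ (Fin d))
    (ρ₀ ρ₂ : ℝ) (h0 : 0 ≤ ρ₀) (hlt : ρ₀ < ρ₂)
    (hspecL : ∀ z ∈ spectrum ℂ L, ‖z‖ ≤ ρ₀) :
    ∃ N : ℕ, 1 ≤ N ∧ ‖L ^ N‖ < ρ₂ ^ N := by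
  have hρ₂ : 0 < ρ₂ := lt_of_le_of_lt h0 hlt
  have hsr : spectralRadius ℂ L ≤ ENNReal.ofReal ρ₀ := by
    rw [spectralRadius]
    apply iSup₂_le
    intro z hz
    have : ‖z‖ ≤ ρ₀ := by
      exact hspecL z hz
    calc (‖z‖₊ : ℝ≥0∞) = ENNReal.ofReal ‖z‖ := (ofReal_norm z).symm
      _ ≤ ENNReal.ofReal ρ₀ := ENNReal.ofReal_le_ofReal this
  have hgel := spectrum.pow_nnnorm_pow_one_div_tendsto_nhds_spectralRadius L
  have hsrlt : spectralRadius ℂ L < ENNReal.ofReal ρ₂ :=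
    lt_of_le_of_lt hsr (ENNReal.ofReal_lt_ofReal_iff hρ₂ |>.mpr hlt)
  have hev : ∀ᶠ n : ℕ in atTop, ((‖L ^ n‖₊ : ℝ≥0∞) ^ (1 / (n:ℝ))) < ENNReal.ofReal ρ₂ :=
    hgel.eventually_lt_const hsrlt
  obtain ⟨N, hN1, hN⟩ : ∃ N : ℕ, 1 ≤ N ∧ ((‖L ^ N‖₊ : ℝ≥0∞) ^ (1 / (N:ℝ))) < ENNReal.ofReal ρ₂ := by
    obtain ⟨N, hN⟩ := (hev.and (eventually_ge_atTop 1)).exists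
    exact ⟨N, hN.2, hN.1⟩
  refine ⟨N, hN1, ?_⟩
  have hNpos : (0:ℝ) < N := by exact_mod_cast hN1
  have h2 : ((‖L ^ N‖₊ : ℝ≥0∞) ^ (1 / (N:ℝ))) ^ (N:ℝ) < (ENNReal.ofReal ρ₂) ^ (N:ℝ) := by
    apply ENNReal.rpow_lt_rpow hN hNpos
  rw [← ENNReal.rpow_mul, one_div, inv_mul_cancel₀ (ne_of_gt hNpos), ENNReal.rpow_one] at h2
  have h3 : (ENNReal.ofReal ρ₂) ^ (N:ℝ) = ENNReal.ofReal (ρ₂ ^ (N:ℝ)) := by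
    rw [← ENNReal.ofReal_rpow_of_pos hρ₂]
  rw [h3] at h2
  have h4 : ((‖L ^ N‖₊ : ℝ≥0∞)).toReal < ρ₂ ^ (N:ℝ) := by
    rw [ENNReal.lt_ofReal_iff_toReal_lt (by simp)] at h2
    exact h2
  rw [Real.rpow_natCast] at h4
  rw [← coe_nnnorm (L ^ N)] at *
  exact_mod_cast h4

end Gelfand

section Cauchy
variable {d : ℕ}

lemma matOpNorm_nonneg (M : Matrix (Fin d) (Fin d) ℝ) : 0 ≤ matOpNorm M := norm_nonneg _

lemma var_tail (p Astar : ℝ) (hp : 1 ≤ p) (A : ℕ → Matrix (Fin d) (Fin d) ℝ)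
    (hvar : ∀ idx : ℕ → ℕ, StrictMono idx → (∀ k, 1 ≤ idx k) → ∀ m : ℕ,
      ∑ k ∈ Finset.range m, matOpNorm (A (idx (k + 1)) - A (idx k)) ^ p ≤ Astar ^ p) :
    ∀ ε : ℝ, 0 < ε → ∃ n₀ : ℕ, ∀ i j : ℕ, n₀ ≤ i → i < j → matOpNorm (A j - A i) ≤ ε := by
  by_contra hcon
  push_neg at hcon
  obtain ⟨ε, hε, h⟩ := hcon
  have h' : ∀ n₀ : ℕ, ∃ i j : ℕ, n₀ ≤ i ∧ i < j ∧ ε < matOpNorm (A j - A i) := by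
    intro n₀
    obtain ⟨i, j, h1, h2, h3⟩ := h n₀
    exact ⟨i, j, h1, h2, h3⟩
  choose F1 F2 hF1 hF2 hF3 using h'
  set g : ℕ → ℕ × ℕ := fun k => Nat.rec (F1 1, F2 1) (fun _ prev => (F1 (prev.2+1), F2 (prev.2+1))) k with hgdef
  have hg0 : g 0 = (F1 1, F2 1) := rfl
  have hgs : ∀ k, g (k+1) = (F1 ((g k).2+1), F2 ((g k).2+1)) := fun k => rfl
  have hrep : ∀ k, ∃ n, 1 ≤ n ∧ g k = (F1 n, F2 n) := by
    intro k
    cases k with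
    | zero => exact ⟨1, le_refl 1, hg0⟩
    | succ k => exact ⟨(g k).2 + 1, Nat.le_add_left 1 _, hgs k⟩
  have hlt12 : ∀ k, (g k).1 < (g k).2 := by
    intro k; obtain ⟨n, _, hn⟩ := hrep k; rw [hn]; exact hF2 n
  have hone : ∀ k, 1 ≤ (g k).1 := by
    intro k; obtain ⟨n, hn1, hn⟩ := hrep k; rw [hn]; exact le_trans hn1 (hF1 n)
  have hbig : ∀ k, ε < matOpNorm (A (g k).2 - A (g k).1) := by
    intro k; obtain ⟨n, _, hn⟩ := hrep k; rw [hn]; exact hF3 n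
  have hchain : ∀ k, (g k).2 < (g (k+1)).1 := by
    intro k
    rw [hgs k]
    exact lt_of_lt_of_le (Nat.lt_succ_self _) (hF1 _)
  set idx : ℕ → ℕ := fun n => if n % 2 = 0 then (g (n/2)).1 else (g (n/2)).2 with hidxdef
  have hidx_even : ∀ m, idx (2*m) = (g m).1 := by
    intro m
    have h1 : (2*m) % 2 = 0 := by omega
    have h2 : (2*m) / 2 = m := by omega
    simp only [hidxdef, h1, h2, if_true]
  have hidx_odd : ∀ m, idx (2*m+1) = (g m).2 := by
    intro m
    have h1 : (2*m+1) % 2 = 1 := by omega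
    have h2 : (2*m+1) / 2 = m := by omega
    simp only [hidxdef, h1, h2]
    norm_num
  have hmono : StrictMono idx := by
    apply strictMono_nat_of_lt_succ
    intro n
    by_cases hpar : n % 2 = 0
    · obtain ⟨m, rfl⟩ : ∃ m, n = 2*m := ⟨n/2, by omega⟩
      rw [hidx_even m]
      rw [show 2*m+1 = 2*m+1 from rfl, hidx_odd m]
      exact hlt12 m
    · obtain ⟨m, rfl⟩ : ∃ m, n = 2*m+1 := ⟨n/2, by omega⟩
      rw [hidx_odd m]
      rw [show 2*m+1+1 = 2*(m+1) from by ring, hidx_even (m+1)]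
      exact hchain m
  have hge1 : ∀ n, 1 ≤ idx n := by
    intro n
    by_cases hpar : n % 2 = 0
    · obtain ⟨m, rfl⟩ : ∃ m, n = 2*m := ⟨n/2, by omega⟩
      rw [hidx_even m]; exact hone m
    · obtain ⟨m, rfl⟩ : ∃ m, n = 2*m+1 := ⟨n/2, by omega⟩
      rw [hidx_odd m]
      exact le_trans (hone m) (le_of_lt (hlt12 m))
  have hεp : 0 < ε ^ p := Real.rpow_pos_of_pos hε p
  obtain ⟨r, hr⟩ := exists_nat_gt (Astar ^ p / ε ^ p)
  have hAr : Astar ^ p < r * ε ^ p := by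
    rw [div_lt_iff₀ hεp] at hr
    linarith
  have hsum := hvar idx hmono hge1 (2*r)
  have hfnn : ∀ k, 0 ≤ matOpNorm (A (idx (k + 1)) - A (idx k)) ^ p :=
    fun k => Real.rpow_nonneg (matOpNorm_nonneg _) p
  have hlow : (r : ℝ) * ε ^ p ≤ ∑ k ∈ Finset.range (2*r), matOpNorm (A (idx (k + 1)) - A (idx k)) ^ p := by
    have himg : (Finset.range r).image (fun m => 2*m) ⊆ Finset.range (2*r) := by
      intro x hx
      rw [Finset.mem_image] at hx
      obtain ⟨m, hm, rfl⟩ := hx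
      rw [Finset.mem_range] at hm ⊢
      omega
    have hsub := Finset.sum_le_sum_of_subset_of_nonneg himg
      (fun k _ _ => hfnn k)
    have himgsum : ∑ k ∈ (Finset.range r).image (fun m => 2*m),
        matOpNorm (A (idx (k + 1)) - A (idx k)) ^ p
        = ∑ m ∈ Finset.range r, matOpNorm (A (idx (2*m + 1)) - A (idx (2*m))) ^ p := by
      rw [Finset.sum_image (fun a _ b _ h => by omega)]
    have hterm : ∀ m ∈ Finset.range r, ε ^ p ≤ matOpNorm (A (idx (2*m + 1)) - A (idx (2*m))) ^ p := by
      intro m _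
      rw [hidx_even m, show 2*m+1 = 2*m+1 from rfl, hidx_odd m]
      exact Real.rpow_le_rpow hε.le (le_of_lt (hbig m)) (le_trans zero_le_one hp)
    calc (r : ℝ) * ε ^ p = ∑ _m ∈ Finset.range r, ε ^ p := by
          rw [Finset.sum_const, Finset.card_range, nsmul_eq_mul]
      _ ≤ ∑ m ∈ Finset.range r, matOpNorm (A (idx (2*m + 1)) - A (idx (2*m))) ^ p :=
          Finset.sum_le_sum hterm
      _ = ∑ k ∈ (Finset.range r).image (fun m => 2*m),
            matOpNorm (A (idx (k + 1)) - A (idx k)) ^ p := himgsum.symm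
      _ ≤ _ := hsub
  linarith
end Cauchy

section MainAux
variable {d : ℕ}

lemma pow_ratio {ρ Ca : ℝ} (hρ0 : 0 < ρ) (hρ1 : ρ ≤ 1) (hCa : 1 ≤ Ca) {n m : ℕ} (hnm : n ≤ m) :
    Ca ^ n * ρ ^ m ≤ Ca ^ m * ρ ^ n := by
  obtain ⟨j, rfl⟩ := Nat.exists_eq_add_of_le hnm
  rw [pow_add, pow_add]
  calc Ca ^ n * (ρ ^ n * ρ ^ j) = (Ca ^ n * ρ ^ n) * ρ ^ j := by ring
    _ ≤ (Ca ^ n * ρ ^ n) * Ca ^ j := by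
        apply mul_le_mul_of_nonneg_left (pow_le_pow_left₀ hρ0.le (le_trans hρ1 hCa) j)
        positivity
    _ = Ca ^ n * Ca ^ j * ρ ^ n := by ring

lemma PhiC_one : PhiC (1 : Matrix (Fin d) (Fin d) ℝ) = 1 := by
  unfold PhiC
  have h1 : (1 : Matrix (Fin d) (Fin d) ℝ).map (algebraMap ℝ ℂ) = 1 := by
    ext i j
    by_cases h : i = j <;> simp [Matrix.map_apply, Matrix.one_apply, h]
  rw [h1, _root_.map_one]

lemma PhiC_list_prod : ∀ l : List (Matrix (Fin d) (Fin d) ℝ),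
    PhiC l.prod = (l.map PhiC).prod := by
  intro l
  induction l with
  | nil => rw [List.prod_nil, List.map_nil, List.prod_nil]; exact PhiC_one
  | cons x xs ih => rw [List.prod_cons, List.map_cons, List.prod_cons, PhiC_mul, ih]

end MainAux


set_option maxHeartbeats 2000000 in
open Filter Topology in
/-- Lemma C.8: for uniformly bounded matrices with spectral radii at most `ρ₀ < 1` and
bounded sequence `p`-variation, products decay geometrically: for every `ρ ∈ (ρ₀, 1)` there
is `K` with `‖A_{s+1} ⋯ A_t‖ ≤ K ρ^{t−s}` for all `0 ≤ s < t`. -/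
theorem stmt_7 {d : ℕ} (p ρ₀ Astar : ℝ) (hp : 1 ≤ p) (h0 : 0 ≤ ρ₀) (h1 : ρ₀ < 1)
    (A : ℕ → Matrix (Fin d) (Fin d) ℝ)
    (hbd : ∀ i, matOpNorm (A i) ≤ Astar)
    (hspec : ∀ i, specRad (A i) ≤ ρ₀)
    (hvar : ∀ idx : ℕ → ℕ, StrictMono idx → (∀ k, 1 ≤ idx k) → ∀ m : ℕ,
      ∑ k ∈ Finset.range m, matOpNorm (A (idx (k + 1)) - A (idx k)) ^ p ≤ Astar ^ p) :
    ∀ ρ : ℝ, ρ₀ < ρ → ρ < 1 →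
      ∃ K : ℝ, ∀ s t : ℕ, s < t → matOpNorm (matProd A s t) ≤ K * ρ ^ (t - s) := by
  intro ρ hρ0 hρ1
  classical
  have hρpos : 0 < ρ := lt_of_le_of_lt h0 hρ0
  have hAstar0 : 0 ≤ Astar := le_trans (matOpNorm_nonneg (A 0)) (hbd 0)
  set b : ℕ → (EuclideanSpace ℂ (Fin d) →L[ℂ] EuclideanSpace ℂ (Fin d)) :=
    fun i => PhiC (A i) with hbdef
  set Ca : ℝ := (d:ℝ)^2 * Astar + 1 with hCadef
  have hCa1 : 1 ≤ Ca := by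
    have : 0 ≤ (d:ℝ)^2 * Astar := by positivity
    simp only [hCadef]; linarith
  have hCa0 : 0 < Ca := lt_of_lt_of_le one_pos hCa1
  have hb_norm : ∀ i, ‖b i‖ ≤ Ca := by
    intro i
    calc ‖b i‖ ≤ (d:ℝ)^2 * matOpNorm (A i) := PhiC_norm_le _
      _ ≤ (d:ℝ)^2 * Astar := by
          apply mul_le_mul_of_nonneg_left (hbd i) (by positivity)
      _ ≤ Ca := by simp only [hCadef]; linarith
  -- Cauchy sequence and limit
  have hcauchy : CauchySeq b := by
    rw [Metric.cauchySeq_iff]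
    intro ε hε
    have hd2 : (0:ℝ) < (d:ℝ)^2 + 1 := by positivity
    obtain ⟨n₀, hn₀⟩ := var_tail p Astar hp A hvar (ε / ((d:ℝ)^2+1)) (by positivity)
    refine ⟨n₀, fun m hm n hn => ?_⟩
    have key : ∀ i j, n₀ ≤ i → i < j → dist (b j) (b i) < ε := by
      intro i j hi hij
      rw [dist_eq_norm]
      have : b j - b i = PhiC (A j - A i) := (PhiC_sub _ _).symm
      rw [this]
      calc ‖PhiC (A j - A i)‖ ≤ (d:ℝ)^2 * matOpNorm (A j - A i) := PhiC_norm_le _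
        _ ≤ (d:ℝ)^2 * (ε / ((d:ℝ)^2+1)) := by
            apply mul_le_mul_of_nonneg_left (hn₀ i j hi hij) (by positivity)
        _ < ε := by
            rw [mul_div_assoc']
            rw [div_lt_iff₀ hd2]
            nlinarith
    rcases lt_trichotomy m n with h | h | h
    · rw [dist_comm]; exact key m n hm h
    · subst h; rw [dist_self]; exact hε
    · exact key n m hn h
  obtain ⟨L, hL⟩ := cauchySeq_tendsto_of_complete hcauchy
  have hLnorm : ‖L‖ ≤ Ca := le_of_tendsto hL.norm (Filter.Eventually.of_forall hb_norm)
  -- spectra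
  have hzb : ∀ i, ∀ z ∈ spectrum ℂ ((A i).map (algebraMap ℝ ℂ)), ‖z‖ ≤ ρ₀ := by
    intro i z hz
    exact le_trans (abs_le_specRad (A i) hz) (hspec i)
  set CL : Matrix (Fin d) (Fin d) ℂ := (Matrix.toEuclideanCLM (𝕜 := ℂ) (n := Fin d)).symm L
    with hCLdef
  have hCL : Matrix.toEuclideanCLM (𝕜 := ℂ) CL = L := by
    simp [hCLdef]
  have hdiff : ∀ i, Matrix.toEuclideanCLM (𝕜 := ℂ) ((A i).map (algebraMap ℝ ℂ) - CL) = b i - L := by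
    intro i
    rw [_root_.map_sub, hCL]
    rfl
  have hentry : ∀ k l, Tendsto (fun i => ((A i).map (algebraMap ℝ ℂ)) k l) atTop (𝓝 (CL k l)) := by
    intro k l
    rw [← tendsto_sub_nhds_zero_iff]
    have hnorm0 : Tendsto (fun i => ‖b i - L‖) atTop (𝓝 0) :=
      tendsto_iff_norm_sub_tendsto_zero.mp hL
    apply squeeze_zero_norm _ hnorm0
    intro i
    calc ‖((A i).map (algebraMap ℝ ℂ)) k l - CL k l‖
        = ‖(((A i).map (algebraMap ℝ ℂ)) - CL) k l‖ := by rw [Matrix.sub_apply]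
      _ ≤ ‖Matrix.toEuclideanCLM (𝕜 := ℂ) (((A i).map (algebraMap ℝ ℂ)) - CL)‖ :=
          entry_le_clm _ k l
      _ = ‖b i - L‖ := by rw [hdiff i]
  have hzL : ∀ z ∈ spectrum ℂ L, ‖z‖ ≤ ρ₀ := by
    intro z hz
    have hspecCL : spectrum ℂ L = spectrum ℂ CL := by
      rw [← hCL]
      exact AlgEquiv.spectrum_eq (Matrix.toEuclideanCLM (𝕜 := ℂ) (n := Fin d)) CL
    rw [hspecCL] at hz
    exact spec_limit ρ₀ (fun i => (A i).map (algebraMap ℝ ℂ)) CL hzb hentry z hz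
  -- Gelfand
  set ρ₂ : ℝ := (ρ₀ + ρ)/2 with hρ₂def
  have hρ₂a : ρ₀ < ρ₂ := by simp only [hρ₂def]; linarith
  have hρ₂b : ρ₂ < ρ := by simp only [hρ₂def]; linarith
  have hρ₂pos : 0 < ρ₂ := lt_of_le_of_lt h0 hρ₂a
  obtain ⟨N, hN1, hLN⟩ := exists_good_power L ρ₀ ρ₂ h0 hρ₂a hzL
  -- choose δ and threshold
  have hgap : 0 < ρ ^ N - ρ₂ ^ N := by
    have := pow_lt_pow_left₀ hρ₂b hρ₂pos.le (by omega : N ≠ 0)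
    linarith
  set δ : ℝ := (ρ ^ N - ρ₂ ^ N) / ((N:ℝ) * Ca ^ N + 1) with hδdef
  have hden : (0:ℝ) < (N:ℝ) * Ca ^ N + 1 := by positivity
  have hδpos : 0 < δ := by simp only [hδdef]; positivity
  obtain ⟨i₀, hi₀⟩ := (Metric.tendsto_atTop.mp hL) δ hδpos
  -- block bound
  have hblock : ∀ u, i₀ ≤ u → ‖((List.range N).map (fun k => b (u+1+k))).prod‖ ≤ ρ ^ N := by
    intro u hu
    have hconstL : ((List.range N).map (fun _ : ℕ => L)).prod = L ^ N := by
      rw [List.map_const', List.length_range, List.prod_replicate]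
    have hdiffb : ‖((List.range N).map (fun k => b (u+1+k))).prod
        - ((List.range N).map (fun _ : ℕ => L)).prod‖ ≤ (N:ℝ) * Ca ^ N * δ := by
      apply range_prod_sub _ _ Ca δ hCa1 hδpos.le N
      · intro k _; exact hb_norm _
      · intro k _; exact hLnorm
      · intro k _
        have : i₀ ≤ u + 1 + k := by omega
        have hd := hi₀ (u+1+k) this
        rw [dist_eq_norm] at hd
        exact hd.le
    have hNd : (N:ℝ) * Ca ^ N * δ ≤ ρ ^ N - ρ₂ ^ N := by
      rw [hδdef, mul_div_assoc']
      rw [div_le_iff₀ hden]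
      nlinarith [hgap, hden]
    set P := ((List.range N).map (fun k => b (u+1+k))).prod with hPdef
    set Q := ((List.range N).map (fun _ : ℕ => L)).prod with hQdef
    have hPQ : ‖P‖ ≤ ‖P - Q‖ + ‖Q‖ := by
      have h := norm_add_le (P - Q) Q
      rwa [sub_add_cancel] at h
    calc ‖P‖ ≤ ‖P - Q‖ + ‖Q‖ := hPQ
      _ ≤ ((N:ℝ) * Ca ^ N * δ) + ρ₂ ^ N := by
          apply add_le_add hdiffb
          rw [hconstL]; exact hLN.le
      _ ≤ ρ ^ N := by linarith
  -- geometric decay beyond i₀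
  set Cb : ℝ := Ca ^ N / ρ ^ N with hCbdef
  have hρN : (0:ℝ) < ρ ^ N := by positivity
  have hCb1 : 1 ≤ Cb := by
    rw [hCbdef, le_div_iff₀ hρN]
    have h1 : ρ ^ N ≤ 1 := pow_le_one₀ hρpos.le hρ1.le
    have h2 : (1:ℝ) ≤ Ca ^ N := one_le_pow₀ hCa1
    linarith
  have hdecay : ∀ n : ℕ, ∀ u, i₀ ≤ u →
      ‖((List.range n).map (fun k => b (u+1+k))).prod‖ ≤ Cb * ρ ^ n := by
    intro n
    induction n using Nat.strong_induction_on with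
    | _ n ih =>
      intro u hu
      by_cases hn : n < N
      · have hb1 : ‖((List.range n).map (fun k => b (u+1+k))).prod‖ ≤ Ca ^ n :=
          range_prod_norm_le _ n Ca hCa0.le (fun k _ => hb_norm _)
        have : Ca ^ n ≤ Cb * ρ ^ n := by
          rw [hCbdef, div_mul_eq_mul_div, le_div_iff₀ hρN]
          exact pow_ratio hρpos hρ1.le hCa1 (le_of_lt hn)
        linarith
      · push_neg at hn
        have hsplit := range_prod_split b u (u+N) (u+n) (by omega) (by omega)
        have e1 : u + N - u = N := by omega
        have e2 : u + n - u = n := by omega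
        have e3 : u + n - (u + N) = n - N := by omega
        rw [e1, e2, e3] at hsplit
        rw [hsplit]
        have hb1 := hblock u hu
        have hb2 := ih (n - N) (by omega) (u + N) (by omega)
        calc ‖_ * _‖ ≤ ‖((List.range N).map (fun k => b (u+1+k))).prod‖
              * ‖((List.range (n-N)).map (fun k => b (u+N+1+k))).prod‖ := norm_mul_le _ _
          _ ≤ ρ ^ N * (Cb * ρ ^ (n - N)) := by
              apply mul_le_mul hb1 hb2 (norm_nonneg _) hρN.le
          _ = Cb * ρ ^ n := by
              have hpoweq : ρ ^ N * ρ ^ (n - N) = ρ ^ n := by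
                rw [← pow_add]
                congr 1
                omega
              rw [← hpoweq]
              ring
  -- final assembly
  refine ⟨(d:ℝ)^2 * (Ca ^ i₀ * Cb) / ρ ^ i₀, ?_⟩
  intro s t hst
  have hρi₀ : (0:ℝ) < ρ ^ i₀ := by positivity
  have hPv : PhiC (matProd A s t) = ((List.range (t-s)).map (fun k => b (s+1+k))).prod := by
    rw [matProd, PhiC_list_prod, List.map_map]
    rfl
  have hmain : ρ ^ i₀ * ‖((List.range (t-s)).map (fun k => b (s+1+k))).prod‖
      ≤ (Ca ^ i₀ * Cb) * ρ ^ (t - s) := by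
    rcases le_or_gt i₀ s with hcase | hcase
    · -- s ≥ i₀
      have := hdecay (t - s) s hcase
      have hρi₀le : ρ ^ i₀ ≤ Ca ^ i₀ := pow_le_pow_left₀ hρpos.le (le_trans hρ1.le hCa1) i₀
      have h1le : ρ ^ i₀ ≤ Ca ^ i₀ := hρi₀le
      calc ρ ^ i₀ * ‖((List.range (t-s)).map (fun k => b (s+1+k))).prod‖
          ≤ ρ ^ i₀ * (Cb * ρ ^ (t - s)) := by
            apply mul_le_mul_of_nonneg_left this hρi₀.le
        _ ≤ Ca ^ i₀ * (Cb * ρ ^ (t - s)) := by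
            apply mul_le_mul_of_nonneg_right h1le
            positivity
        _ = (Ca ^ i₀ * Cb) * ρ ^ (t - s) := by ring
    · rcases le_or_gt t i₀ with hcase2 | hcase2
      · -- t ≤ i₀ : short product
        have hb1 : ‖((List.range (t-s)).map (fun k => b (s+1+k))).prod‖ ≤ Ca ^ (t-s) :=
          range_prod_norm_le _ _ Ca hCa0.le (fun k _ => hb_norm _)
        have hle : t - s ≤ i₀ := by omega
        have hratio := pow_ratio hρpos hρ1.le hCa1 hle
        calc ρ ^ i₀ * ‖((List.range (t-s)).map (fun k => b (s+1+k))).prod‖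
            ≤ ρ ^ i₀ * Ca ^ (t-s) := by
              apply mul_le_mul_of_nonneg_left hb1 hρi₀.le
          _ = Ca ^ (t-s) * ρ ^ i₀ := by ring
          _ ≤ Ca ^ i₀ * ρ ^ (t-s) := hratio
          _ ≤ (Ca ^ i₀ * Cb) * ρ ^ (t - s) := by
              have : Ca ^ i₀ ≤ Ca ^ i₀ * Cb := by
                nlinarith [one_le_pow₀ hCa1 (n := i₀)]
              apply mul_le_mul_of_nonneg_right this
              positivity
      · -- s < i₀ < t : split at i₀
        have hsplit := range_prod_split b s i₀ t (by omega) (by omega)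
        rw [hsplit]
        set P1 := ((List.range (i₀-s)).map (fun k => b (s+1+k))).prod with hP1def
        set P2 := ((List.range (t-i₀)).map (fun k => b (i₀+1+k))).prod with hP2def
        have hb1 : ‖P1‖ ≤ Ca ^ (i₀-s) :=
          range_prod_norm_le _ _ Ca hCa0.le (fun k _ => hb_norm _)
        have hb2 : ‖P2‖ ≤ Cb * ρ ^ (t - i₀) := hdecay (t - i₀) i₀ (le_refl i₀)
        have hCai : Ca ^ (i₀-s) ≤ Ca ^ i₀ := pow_le_pow_right₀ hCa1 (by omega)
        have hρt : ρ ^ i₀ * ρ ^ (t - i₀) ≤ ρ ^ (t - s) := by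
          rw [← pow_add]
          apply pow_le_pow_of_le_one hρpos.le hρ1.le
          omega
        calc ρ ^ i₀ * ‖P1 * P2‖
            ≤ ρ ^ i₀ * (‖P1‖ * ‖P2‖) := by
              apply mul_le_mul_of_nonneg_left (norm_mul_le _ _) hρi₀.le
          _ ≤ ρ ^ i₀ * (Ca ^ (i₀-s) * (Cb * ρ ^ (t-i₀))) := by
              apply mul_le_mul_of_nonneg_left _ hρi₀.le
              apply mul_le_mul hb1 hb2 (norm_nonneg _) (by positivity)
          _ = (Ca ^ (i₀-s) * Cb) * (ρ ^ i₀ * ρ ^ (t-i₀)) := by ring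
          _ ≤ (Ca ^ (i₀-s) * Cb) * ρ ^ (t-s) := by
              apply mul_le_mul_of_nonneg_left hρt
              positivity
          _ ≤ (Ca ^ i₀ * Cb) * ρ ^ (t-s) := by
              apply mul_le_mul_of_nonneg_right _ (by positivity)
              apply mul_le_mul_of_nonneg_right hCai (by linarith)
  -- convert back to matOpNorm
  have hfin : matOpNorm (matProd A s t) ≤ (d:ℝ)^2
      * ‖((List.range (t-s)).map (fun k => b (s+1+k))).prod‖ := by
    rw [← hPv]
    exact matOpNorm_le_PhiC _
  rw [div_mul_eq_mul_div, le_div_iff₀ hρi₀]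
  calc matOpNorm (matProd A s t) * ρ ^ i₀
      ≤ ((d:ℝ)^2 * ‖((List.range (t-s)).map (fun k => b (s+1+k))).prod‖) * ρ ^ i₀ := by
        apply mul_le_mul_of_nonneg_right hfin hρi₀.le
    _ = (d:ℝ)^2 * (ρ ^ i₀ * ‖((List.range (t-s)).map (fun k => b (s+1+k))).prod‖) := by ring
    _ ≤ (d:ℝ)^2 * ((Ca ^ i₀ * Cb) * ρ ^ (t - s)) := by
        apply mul_le_mul_of_nonneg_left hmain (by positivity)
    _ = (d:ℝ)^2 * (Ca ^ i₀ * Cb) * ρ ^ (t - s) := by ring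
end

section
/- Let (ε_i)_{i∈ℤ} be iid random variables and G : ℝ^∞ → ℝ^d measurable with ‖G(𝛆_0)‖_{L_q} < ∞ for some q ≥ 1, where 𝛆_t = (ε_t, ε_{t−1}, …). Let (ε*_i) be an independent iid copy, and define 𝛆*_{0,j} = (ε_0, …, ε_{−j+1}, ε*_{−j}, ε*_{−j−1}, …) (all coordinates beyond lag j replaced) and the single-coordinate replacement 𝛆̃_{0,j} = (ε_0, …, ε_{−j+1}, ε*_{−j}, ε_{−j−1}, …). Then ‖G(𝛆_0) − G(𝛆*_{0,j})‖_{L_q} ≤ ∑_{s=0}^∞ ‖G(𝛆_0) − G(𝛆̃_{0,j+s})‖_{L_q}. -/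
open MeasureTheory ProbabilityTheory

open MeasureTheory ProbabilityTheory

section Aux

variable {Ω : Type*} [MeasureSpace Ω] [IsProbabilityMeasure (ℙ : Measure Ω)]
  (η : ℕ ⊕ ℕ → Ω → ℝ)

/-- cylinder measure computation for an injectively reindexed iid family -/
lemma meas_cyl (hmeas : ∀ i, Measurable (η i))
    (hindep : iIndepFun η ℙ)
    (hid : ∀ i j, IdentDistrib (η i) (η j) ℙ ℙ)
    (π : ℕ ⊕ ℕ → ℕ ⊕ ℕ) (hπ : Function.Injective π)
    (F : Finset (ℕ ⊕ ℕ)) (t : ℕ ⊕ ℕ → Set ℝ) (ht : ∀ i ∈ F, MeasurableSet (t i)) :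
    ℙ (⋂ i ∈ F, η (π i) ⁻¹' t i) = ∏ i ∈ F, ℙ (η (Sum.inl 0) ⁻¹' t i) := by
  classical
  have hinv : ∀ i, Function.invFun π (π i) = i := Function.leftInverse_invFun hπ
  set u : ℕ ⊕ ℕ → Set ℝ := fun k => t (Function.invFun π k) with hu
  have h1 : (⋂ i ∈ F, η (π i) ⁻¹' t i) = ⋂ k ∈ F.image π, η k ⁻¹' u k := by
    rw [Finset.set_biInter_finset_image]
    apply Set.iInter₂_congr
    intro i _
    simp [hu, hinv i]
  have h2 : ℙ (⋂ k ∈ F.image π, η k ⁻¹' u k) = ∏ k ∈ F.image π, ℙ (η k ⁻¹' u k) := by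
    refine hindep.measure_inter_preimage_eq_mul _ fun k hk => ?_
    rcases Finset.mem_image.1 hk with ⟨i, hi, rfl⟩
    rw [hu]; simp only [hinv i]; exact ht i hi
  rw [h1, h2, Finset.prod_image (fun i _ j _ h => hπ h)]
  apply Finset.prod_congr rfl
  intro i hi
  have : u (π i) = t i := by simp [hu, hinv i]
  rw [this]
  exact (hid (π i) (Sum.inl 0)).measure_mem_eq (ht i hi)

/-- exchangeability of the iid family under injective reindexing -/
lemma map_pi_eq (hmeas : ∀ i, Measurable (η i))
    (hindep : iIndepFun η ℙ)
    (hid : ∀ i j, IdentDistrib (η i) (η j) ℙ ℙ)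
    (π : ℕ ⊕ ℕ → ℕ ⊕ ℕ) (hπ : Function.Injective π) :
    Measure.map (fun ω (i : ℕ ⊕ ℕ) => η (π i) ω) ℙ
      = Measure.map (fun ω (i : ℕ ⊕ ℕ) => η i ω) ℙ := by
  classical
  have hΦπ : Measurable (fun ω (i : ℕ ⊕ ℕ) => η (π i) ω) :=
    measurable_pi_lambda _ fun i => hmeas _
  have hΦ : Measurable (fun ω (i : ℕ ⊕ ℕ) => η i ω) :=
    measurable_pi_lambda _ fun i => hmeas _
  set C : Set (Set ((ℕ ⊕ ℕ) → ℝ)) := piiUnionInter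
    (fun i => {s | MeasurableSet[MeasurableSpace.comap (fun x => x i) inferInstance] s})
    Set.univ with hC
  have hgen : (inferInstance : MeasurableSpace ((ℕ ⊕ ℕ) → ℝ)) =
      MeasurableSpace.generateFrom C := by
    have h := generateFrom_piiUnionInter_measurableSet
      (fun i : ℕ ⊕ ℕ => MeasurableSpace.comap (fun x : (ℕ ⊕ ℕ) → ℝ => x i) inferInstance)
      Set.univ
    rw [hC, h, iSup_univ]
    rfl
  have hpi : IsPiSystem C :=
    isPiSystem_piiUnionInter _
      (fun i => @MeasurableSpace.isPiSystem_measurableSet _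
        (MeasurableSpace.comap (fun x : (ℕ ⊕ ℕ) → ℝ => x i) inferInstance)) _
  have hPπ : IsProbabilityMeasure (Measure.map (fun ω (i : ℕ ⊕ ℕ) => η (π i) ω) ℙ) :=
    Measure.isProbabilityMeasure_map hΦπ.aemeasurable
  have hP : IsProbabilityMeasure (Measure.map (fun ω (i : ℕ ⊕ ℕ) => η i ω) ℙ) :=
    Measure.isProbabilityMeasure_map hΦ.aemeasurable
  refine MeasureTheory.ext_of_generate_finite C hgen hpi (fun s hs => ?_)
    (by rw [measure_univ, measure_univ])
  obtain ⟨F, -, f, hf, rfl⟩ := hs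
  have hex : ∀ i, ∃ u : Set ℝ, i ∈ F → MeasurableSet u ∧ (fun x : (ℕ ⊕ ℕ) → ℝ => x i) ⁻¹' u = f i := by
    intro i
    by_cases hi : i ∈ F
    · obtain ⟨u, hu, hu2⟩ := MeasurableSpace.measurableSet_comap.1 (hf i hi)
      exact ⟨u, fun _ => ⟨hu, hu2⟩⟩
    · exact ⟨∅, fun h => absurd h hi⟩
  choose t htf using hex
  have hmeast : ∀ i ∈ F, MeasurableSet (t i) := fun i hi => (htf i hi).1
  have hpre : ∀ (σ : ℕ ⊕ ℕ → ℕ ⊕ ℕ),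
      (fun ω (i : ℕ ⊕ ℕ) => η (σ i) ω) ⁻¹' (⋂ i ∈ F, f i) = ⋂ i ∈ F, η (σ i) ⁻¹' t i := by
    intro σ
    rw [Set.preimage_iInter₂]
    apply Set.iInter₂_congr
    intro i hi
    rw [← (htf i hi).2]
    rfl
  have hmf : MeasurableSet (⋂ i ∈ F, f i) := by
    have h2 : MeasurableSet[MeasurableSpace.generateFrom C] (⋂ i ∈ F, f i) :=
      MeasurableSpace.measurableSet_generateFrom ⟨F, by simp, f, hf, rfl⟩
    rwa [← hgen] at h2
  have e1 := hpre π
  have e2 := hpre id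
  simp only [id_eq] at e2
  have e3 := meas_cyl η hmeas hindep hid id (fun a b h => h) F t hmeast
  simp only [id_eq] at e3
  rw [Measure.map_apply hΦπ hmf, Measure.map_apply hΦ hmf, e1, e2,
    meas_cyl η hmeas hindep hid π hπ F t hmeast]
  exact e3.symm

end Aux
open scoped ENNReal NNReal symmDiff

/-- the algebra of sets depending on finitely many coordinates -/
def cylAlg : Set (Set (ℕ → ℝ)) :=
  {s | ∃ (n : ℕ) (B : Set (Fin n → ℝ)), MeasurableSet B ∧
    (fun x (k : Fin n) => x (k : ℕ)) ⁻¹' B = s}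

lemma measurable_finProj (n : ℕ) : Measurable (fun (x : ℕ → ℝ) (k : Fin n) => x (k : ℕ)) :=
  measurable_pi_lambda _ fun _ => measurable_pi_apply _

lemma measurable_finRes {n N : ℕ} (h : n ≤ N) :
    Measurable (fun (v : Fin N → ℝ) (k : Fin n) => v (Fin.castLE h k)) :=
  measurable_pi_lambda _ fun _ => measurable_pi_apply _

lemma cylAlg_lift {n N : ℕ} (h : n ≤ N) (B : Set (Fin n → ℝ)) :
    (fun (x : ℕ → ℝ) (k : Fin n) => x (k : ℕ)) ⁻¹' B
      = (fun (x : ℕ → ℝ) (k : Fin N) => x (k : ℕ)) ⁻¹'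
        ((fun (v : Fin N → ℝ) (k : Fin n) => v (Fin.castLE h k)) ⁻¹' B) := by
  ext x
  simp only [Set.mem_preimage]
  have : (fun k : Fin n => x ((Fin.castLE h k : Fin N) : ℕ)) = fun k : Fin n => x (k : ℕ) := by
    funext k; rw [Fin.coe_castLE]
  rw [this]

lemma cylAlg_measurableSet {s : Set (ℕ → ℝ)} (hs : s ∈ cylAlg) : MeasurableSet s := by
  obtain ⟨n, B, hB, rfl⟩ := hs
  exact measurable_finProj n hB

lemma isSetAlgebra_cylAlg : IsSetAlgebra cylAlg where
  empty_mem := ⟨0, ∅, MeasurableSet.empty, by simp⟩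
  compl_mem s hs := by
    obtain ⟨n, B, hB, rfl⟩ := hs
    exact ⟨n, Bᶜ, hB.compl, by rw [Set.preimage_compl]⟩
  union_mem s t hs ht := by
    obtain ⟨n, B, hB, rfl⟩ := hs
    obtain ⟨m, C, hC, rfl⟩ := ht
    refine ⟨max n m,
      ((fun v (k : Fin n) => v (Fin.castLE (le_max_left n m) k)) ⁻¹' B) ∪
      ((fun v (k : Fin m) => v (Fin.castLE (le_max_right n m) k)) ⁻¹' C),
      ((measurable_finRes _) hB).union ((measurable_finRes _) hC), ?_⟩
    rw [Set.preimage_union, ← cylAlg_lift (le_max_left n m), ← cylAlg_lift (le_max_right n m)]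

lemma generateFrom_cylAlg :
    MeasurableSpace.generateFrom cylAlg = (inferInstance : MeasurableSpace (ℕ → ℝ)) := by
  apply le_antisymm
  · exact MeasurableSpace.generateFrom_le fun s hs => cylAlg_measurableSet hs
  · have hpi : (inferInstance : MeasurableSpace (ℕ → ℝ)) =
        ⨆ k : ℕ, MeasurableSpace.comap (fun x : ℕ → ℝ => x k) inferInstance := rfl
    rw [hpi]
    refine iSup_le fun k => fun s hs => ?_
    obtain ⟨t, ht, rfl⟩ := MeasurableSpace.measurableSet_comap.1 hs
    apply MeasurableSpace.measurableSet_generateFrom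
    refine ⟨k + 1, (fun v : Fin (k+1) → ℝ => v ⟨k, Nat.lt_succ_self k⟩) ⁻¹' t,
      (measurable_pi_apply _) ht, ?_⟩
    ext x
    simp

lemma approx_fin {d : ℕ} (μ : Measure (ℕ → ℝ)) [IsProbabilityMeasure μ] {p : ℝ≥0∞}
    (hp1 : 1 ≤ p) (hpt : p ≠ ∞)
    (G : (ℕ → ℝ) → EuclideanSpace ℝ (Fin d)) (hG : MemLp G p μ)
    {δ : ℝ≥0∞} (hδ : δ ≠ 0) :
    ∃ (n : ℕ) (H : (ℕ → ℝ) → EuclideanSpace ℝ (Fin d)), Measurable H ∧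
      (∀ x y : ℕ → ℝ, (∀ k < n, x k = y k) → H x = H y) ∧
      eLpNorm (G - H) p μ ≤ δ := by
  classical
  have hp0 : p ≠ 0 := (lt_of_lt_of_le zero_lt_one hp1).ne'
  have hdense : μ.MeasureDense cylAlg :=
    .of_generateFrom_isSetAlgebra_finite μ isSetAlgebra_cylAlg generateFrom_cylAlg.symm
  have key : ∀ g : SimpleFunc (ℕ → ℝ) (EuclideanSpace ℝ (Fin d)), ∀ δ : ℝ≥0∞, δ ≠ 0 →
      ∃ (n : ℕ) (H : (ℕ → ℝ) → EuclideanSpace ℝ (Fin d)), Measurable H ∧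
      (∀ x y : ℕ → ℝ, (∀ k < n, x k = y k) → H x = H y) ∧
      eLpNorm (⇑g - H) p μ ≤ δ := by
    intro g
    induction g using SimpleFunc.induction with
    | const c hs =>
      rename_i s
      intro δ hδ
      by_cases hδtop : δ = ∞
      · exact ⟨0, 0, measurable_const, fun x y _ => rfl, hδtop ▸ le_top⟩
      set M : ℝ≥0∞ := (‖c‖₊ : ℝ≥0∞) + 1 with hM
      have hM0 : M ≠ 0 := by simp [hM]
      have hMt : M ≠ ∞ := by simp [hM]
      have hq0 : p.toReal ≠ 0 := ENNReal.toReal_ne_zero.2 ⟨hp0, hpt⟩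
      set γ : ℝ≥0∞ := (δ / M) ^ p.toReal with hγ
      have hδM0 : δ / M ≠ 0 := (ENNReal.div_pos hδ hMt).ne'
      have hδMt : δ / M ≠ ∞ := (ENNReal.div_lt_top hδtop hM0).ne
      have hγ0 : γ ≠ 0 := by
        rw [hγ]
        simp [ENNReal.rpow_eq_zero_iff, hδM0, hδMt]
      have hγt : γ ≠ ∞ := by
        rw [hγ]
        exact (ENNReal.rpow_lt_top_of_nonneg ENNReal.toReal_nonneg hδMt).ne
      obtain ⟨B, hBmem, hμB⟩ := hdense.approx s hs (measure_ne_top μ s) γ.toReal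
        (ENNReal.toReal_pos hγ0 hγt)
      have hμsB : μ (s ∆ B) < γ := by rwa [ENNReal.ofReal_toReal hγt] at hμB
      obtain ⟨n, B', hB', hBeq⟩ := hBmem
      have hBms : MeasurableSet B := cylAlg_measurableSet ⟨n, B', hB', hBeq⟩
      refine ⟨n, Set.indicator B (fun _ => c), measurable_const.indicator hBms, ?_, ?_⟩
      · intro x y hxy
        have hmem : x ∈ B ↔ y ∈ B := by
          rw [← hBeq]
          simp only [Set.mem_preimage]
          have : (fun k : Fin n => x (k : ℕ)) = fun k : Fin n => y (k : ℕ) :=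
            funext fun k => hxy k k.isLt
          rw [this]
        by_cases hx : x ∈ B
        · rw [Set.indicator_of_mem hx, Set.indicator_of_mem (hmem.1 hx)]
        · rw [Set.indicator_of_notMem hx, Set.indicator_of_notMem (fun h => hx (hmem.2 h))]
      · have hcoe : ⇑(SimpleFunc.piecewise s hs (SimpleFunc.const _ c) (SimpleFunc.const _ 0))
            = Set.indicator s (fun _ => c) := by
          simp only [SimpleFunc.coe_piecewise, SimpleFunc.coe_const, SimpleFunc.coe_zero,
            Set.piecewise_eq_indicator]
          rfl
        rw [hcoe]
        have hpt1 : ∀ x, ‖(Set.indicator s (fun _ => c) - Set.indicator B (fun _ => c)) x‖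
            ≤ ‖Set.indicator (s ∆ B) (fun _ => c) x‖ := by
          intro x
          by_cases hx : x ∈ s <;> by_cases hxB : x ∈ B <;>
            simp [Set.indicator, Set.mem_symmDiff, hx, hxB]
        refine le_trans (eLpNorm_mono hpt1) ?_
        rw [eLpNorm_indicator_const (hs.symmDiff hBms) hp0 hpt]
        calc (‖c‖₊ : ℝ≥0∞) * μ (s ∆ B) ^ (1 / p.toReal)
            ≤ M * γ ^ (1 / p.toReal) := by
              refine mul_le_mul ?_ ?_ zero_le zero_le
              · rw [hM]; exact le_self_add
              · exact ENNReal.rpow_le_rpow hμsB.le (by positivity)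
          _ = M * (δ / M) := by
              rw [hγ, ← ENNReal.rpow_mul, mul_one_div_cancel hq0, ENNReal.rpow_one]
          _ = δ := ENNReal.mul_div_cancel hM0 hMt
    | add hdisj hf hg =>
      rename_i f g
      intro δ hδ
      have hhalf : (δ / 2 : ℝ≥0∞) ≠ 0 := (ENNReal.half_pos hδ).ne'
      obtain ⟨n₁, H₁, hH₁m, hH₁inv, hH₁⟩ := hf (δ / 2) hhalf
      obtain ⟨n₂, H₂, hH₂m, hH₂inv, hH₂⟩ := hg (δ / 2) hhalf
      refine ⟨max n₁ n₂, H₁ + H₂, hH₁m.add hH₂m, ?_, ?_⟩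
      · intro x y hxy
        have e1 := hH₁inv x y (fun k hk => hxy k (lt_of_lt_of_le hk (le_max_left _ _)))
        have e2 := hH₂inv x y (fun k hk => hxy k (lt_of_lt_of_le hk (le_max_right _ _)))
        simp [e1, e2]
      · have hsplit : ⇑(f + g) - (H₁ + H₂) = (⇑f - H₁) + (⇑g - H₂) := by
          rw [SimpleFunc.coe_add]; abel
        rw [hsplit]
        refine le_trans (eLpNorm_add_le
          ((f.measurable.sub hH₁m).aestronglyMeasurable)
          ((g.measurable.sub hH₂m).aestronglyMeasurable) hp1) ?_
        rw [← ENNReal.add_halves δ]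
        exact add_le_add hH₁ hH₂
  have hhalf : (δ / 2 : ℝ≥0∞) ≠ 0 := (ENNReal.half_pos hδ).ne'
  obtain ⟨g, hg, -⟩ := hG.exists_simpleFunc_eLpNorm_sub_lt hpt hhalf
  obtain ⟨n, H, hHm, hHinv, hH⟩ := key g (δ / 2) hhalf
  refine ⟨n, H, hHm, hHinv, ?_⟩
  rw [← sub_add_sub_cancel G ⇑g H]
  refine le_trans (eLpNorm_add_le
    (hG.aestronglyMeasurable.sub g.stronglyMeasurable.aestronglyMeasurable)
    ((g.measurable.sub hHm).aestronglyMeasurable) hp1) ?_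
  rw [← ENNReal.add_halves δ]
  exact add_le_add hg.le hH

section Exch

variable {Ω : Type*} [MeasureSpace Ω] [IsProbabilityMeasure (ℙ : Measure Ω)]
  (η : ℕ ⊕ ℕ → Ω → ℝ)

lemma exch_eLpNorm {d : ℕ} (hmeas : ∀ i, Measurable (η i))
    (hindep : iIndepFun η ℙ)
    (hid : ∀ i j, IdentDistrib (η i) (η j) ℙ ℙ)
    (π : ℕ ⊕ ℕ → ℕ ⊕ ℕ) (hπ : Function.Injective π)
    (F : ((ℕ ⊕ ℕ) → ℝ) → EuclideanSpace ℝ (Fin d)) (hF : Measurable F)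
    (L R : Ω → EuclideanSpace ℝ (Fin d))
    (hL : ∀ ω, L ω = F (fun i => η (π i) ω)) (hR : ∀ ω, R ω = F (fun i => η i ω))
    (p : ℝ≥0∞) :
    eLpNorm L p ℙ = eLpNorm R p ℙ := by
  have hΦπ : Measurable (fun ω (i : ℕ ⊕ ℕ) => η (π i) ω) :=
    measurable_pi_lambda _ fun i => hmeas _
  have hΦ : Measurable (fun ω (i : ℕ ⊕ ℕ) => η i ω) :=
    measurable_pi_lambda _ fun i => hmeas _
  have hmap := map_pi_eq η hmeas hindep hid π hπ
  have hFs : AEStronglyMeasurable F (Measure.map (fun ω (i : ℕ ⊕ ℕ) => η i ω) ℙ) :=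
    hF.aestronglyMeasurable
  have h1 : L = F ∘ (fun ω (i : ℕ ⊕ ℕ) => η (π i) ω) := funext hL
  have h2 : R = F ∘ (fun ω (i : ℕ ⊕ ℕ) => η i ω) := funext hR
  rw [h1, h2, ← eLpNorm_map_measure (by rwa [hmap]) hΦπ.aemeasurable,
    ← eLpNorm_map_measure hFs hΦ.aemeasurable, hmap]

end Exch

/-- swap `inl k ↔ inr k` for `a ≤ k < b` -/
def swapIv (a b : ℕ) : ℕ ⊕ ℕ → ℕ ⊕ ℕ
  | Sum.inl k => if a ≤ k ∧ k < b then Sum.inr k else Sum.inl k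
  | Sum.inr k => if a ≤ k ∧ k < b then Sum.inl k else Sum.inr k

/-- swap `inl k ↔ inr k` for `t ≤ k` -/
def swapTail (t : ℕ) : ℕ ⊕ ℕ → ℕ ⊕ ℕ
  | Sum.inl k => if t ≤ k then Sum.inr k else Sum.inl k
  | Sum.inr k => if t ≤ k then Sum.inl k else Sum.inr k

lemma swapIv_involutive (a b : ℕ) : Function.Involutive (swapIv a b) := by
  intro i
  cases i with
  | inl k =>
    by_cases h : a ≤ k ∧ k < b <;> simp [swapIv, h]
  | inr k =>
    by_cases h : a ≤ k ∧ k < b <;> simp [swapIv, h]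

lemma swapTail_involutive (t : ℕ) : Function.Involutive (swapTail t) := by
  intro i
  cases i with
  | inl k => by_cases h : t ≤ k <;> simp [swapTail, h]
  | inr k => by_cases h : t ≤ k <;> simp [swapTail, h]

/-- the coordinate-selection functionals -/
def F0 {d : ℕ} (G : (ℕ → ℝ) → EuclideanSpace ℝ (Fin d)) :
    ((ℕ ⊕ ℕ) → ℝ) → EuclideanSpace ℝ (Fin d) :=
  fun x => G (fun k => x (Sum.inl k))

def FsD {d : ℕ} (G : (ℕ → ℝ) → EuclideanSpace ℝ (Fin d)) (t : ℕ) :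
    ((ℕ ⊕ ℕ) → ℝ) → EuclideanSpace ℝ (Fin d) :=
  fun x => G (fun k => if k < t then x (Sum.inl k) else x (Sum.inr k))

def FtD {d : ℕ} (G : (ℕ → ℝ) → EuclideanSpace ℝ (Fin d)) (t : ℕ) :
    ((ℕ ⊕ ℕ) → ℝ) → EuclideanSpace ℝ (Fin d) :=
  fun x => G (fun k => if k = t then x (Sum.inr k) else x (Sum.inl k))

def FZD {d : ℕ} (G : (ℕ → ℝ) → EuclideanSpace ℝ (Fin d)) (j m : ℕ) :
    ((ℕ ⊕ ℕ) → ℝ) → EuclideanSpace ℝ (Fin d) :=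
  fun x => G (fun k => if j ≤ k ∧ k < j + m then x (Sum.inr k) else x (Sum.inl k))


/-- Proposition C.1: comparing the all-coordinates replacement `𝛆*_{0,j}` with the
single-coordinate replacements `𝛆̃_{0,j+s}`.  The family `η` indexed by `ℕ ⊕ ℕ` consists of
iid random variables; `η (inl k)` plays the role of `ε_{−k}` and `η (inr k)` of `ε*_{−k}`. -/
theorem stmt_10 {Ω : Type*} [MeasureSpace Ω] [IsProbabilityMeasure (ℙ : Measure Ω)]
    {d : ℕ} (q : ℝ) (hq : 1 ≤ q)
    (η : ℕ ⊕ ℕ → Ω → ℝ)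
    (hmeas : ∀ i, Measurable (η i))
    (hindep : iIndepFun η ℙ)
    (hid : ∀ i j, IdentDistrib (η i) (η j) ℙ ℙ)
    (G : (ℕ → ℝ) → EuclideanSpace ℝ (Fin d))
    (hG : Measurable G)
    (hLq : MemLp (fun ω => G (fun k => η (Sum.inl k) ω)) (ENNReal.ofReal q) ℙ)
    (j : ℕ) :
    eLpNorm (fun ω => G (fun k => η (Sum.inl k) ω)
        - G (fun k => if k < j then η (Sum.inl k) ω else η (Sum.inr k) ω))
      (ENNReal.ofReal q) ℙ
    ≤ ∑' s : ℕ,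
        eLpNorm (fun ω => G (fun k => η (Sum.inl k) ω)
            - G (fun k => if k = j + s then η (Sum.inr k) ω else η (Sum.inl k) ω))
          (ENNReal.ofReal q) ℙ := by
  classical
  have hΦ : Measurable (fun ω (i : ℕ ⊕ ℕ) => η i ω) :=
    measurable_pi_lambda _ fun i => hmeas _
  have hε : Measurable (fun ω (k : ℕ) => η (Sum.inl k) ω) :=
    measurable_pi_lambda _ fun k => hmeas _
  set p := ENNReal.ofReal q with hpdef
  have hp1 : 1 ≤ p := by
    rw [hpdef, ← ENNReal.ofReal_one]
    exact ENNReal.ofReal_le_ofReal hq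
  have hp0 : p ≠ 0 := (lt_of_lt_of_le zero_lt_one hp1).ne'
  have hptop : p ≠ ∞ := ENNReal.ofReal_ne_top
  -- measurability of the functionals
  have hm_ite : ∀ (c : ℕ → Prop) (_ : DecidablePred c) (f g : ℕ → ℕ ⊕ ℕ),
      Measurable (fun (x : (ℕ ⊕ ℕ) → ℝ) (k : ℕ) => if c k then x (f k) else x (g k)) := by
    intro c _ f g
    refine measurable_pi_lambda _ fun k => ?_
    by_cases h : c k
    · simp only [if_pos h]; exact measurable_pi_apply _
    · simp only [if_neg h]; exact measurable_pi_apply _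
  have hmF0 : Measurable (F0 G) :=
    hG.comp (measurable_pi_lambda _ fun k => measurable_pi_apply _)
  have hmFs : ∀ t, Measurable (FsD G t) :=
    fun t => hG.comp (hm_ite (fun k => k < t) inferInstance Sum.inl Sum.inr)
  have hmFt : ∀ t, Measurable (FtD G t) :=
    fun t => hG.comp (hm_ite (fun k => k = t) inferInstance Sum.inr Sum.inl)
  have hmFZ : ∀ m, Measurable (FZD G j m) :=
    fun m => hG.comp (hm_ite (fun k => j ≤ k ∧ k < j + m) inferInstance Sum.inr Sum.inl)
  set Φ : Ω → (ℕ ⊕ ℕ) → ℝ := fun ω i => η i ω with hΦdef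
  set A : ℕ → ℝ≥0∞ := fun t => eLpNorm (fun ω => F0 G (Φ ω) - FsD G t (Φ ω)) p ℙ with hA
  set b : ℕ → ℝ≥0∞ := fun s => eLpNorm (fun ω => F0 G (Φ ω) - FtD G (j + s) (Φ ω)) p ℙ with hb
  -- swap identities
  have hswap1 : ∀ s : ℕ,
      eLpNorm (fun ω => FZD G j s (Φ ω) - FZD G j (s + 1) (Φ ω)) p ℙ = b s := by
    intro s
    refine exch_eLpNorm η hmeas hindep hid (swapIv j (j + s))
      (swapIv_involutive _ _).injective
      (fun x => F0 G x - FtD G (j + s) x) ((hmF0.sub (hmFt _))) _ _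
      (fun ω => ?_) (fun ω => rfl) p
    show FZD G j s (Φ ω) - FZD G j (s + 1) (Φ ω)
        = F0 G (fun i => η (swapIv j (j + s) i) ω)
          - FtD G (j + s) (fun i => η (swapIv j (j + s) i) ω)
    have e1 : F0 G (fun i => η (swapIv j (j + s) i) ω) = FZD G j s (Φ ω) := by
      refine congrArg G (funext fun k => ?_)
      show η (swapIv j (j + s) (Sum.inl k)) ω = _
      simp only [swapIv]
      by_cases hc : j ≤ k ∧ k < j + s
      · rw [if_pos hc, if_pos hc]
      · rw [if_neg hc, if_neg hc]
    have e2 : FtD G (j + s) (fun i => η (swapIv j (j + s) i) ω)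
        = FZD G j (s + 1) (Φ ω) := by
      refine congrArg G (funext fun k => ?_)
      by_cases hk : k = j + s
      · subst hk
        rw [if_pos rfl, if_pos (by omega : j ≤ j + s ∧ j + s < j + (s + 1))]
        show η (swapIv j (j + s) (Sum.inr (j + s))) ω = _
        simp only [swapIv]
        rw [if_neg (by omega : ¬(j ≤ j + s ∧ j + s < j + s))]
      · rw [if_neg hk]
        show η (swapIv j (j + s) (Sum.inl k)) ω = _
        simp only [swapIv]
        by_cases hc : j ≤ k ∧ k < j + s
        · rw [if_pos hc, if_pos (by omega : j ≤ k ∧ k < j + (s + 1))]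
        · rw [if_neg hc, if_neg (by omega : ¬(j ≤ k ∧ k < j + (s + 1)))]
    rw [e1, e2]
  have hswap2 : ∀ m : ℕ,
      eLpNorm (fun ω => FZD G j m (Φ ω) - FsD G j (Φ ω)) p ℙ = A (j + m) := by
    intro m
    refine exch_eLpNorm η hmeas hindep hid (swapIv j (j + m))
      (swapIv_involutive _ _).injective
      (fun x => F0 G x - FsD G (j + m) x) ((hmF0.sub (hmFs _))) _ _
      (fun ω => ?_) (fun ω => rfl) p
    show FZD G j m (Φ ω) - FsD G j (Φ ω)
        = F0 G (fun i => η (swapIv j (j + m) i) ω)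
          - FsD G (j + m) (fun i => η (swapIv j (j + m) i) ω)
    have e1 : F0 G (fun i => η (swapIv j (j + m) i) ω) = FZD G j m (Φ ω) := by
      refine congrArg G (funext fun k => ?_)
      show η (swapIv j (j + m) (Sum.inl k)) ω = _
      simp only [swapIv]
      by_cases hc : j ≤ k ∧ k < j + m
      · rw [if_pos hc, if_pos hc]
      · rw [if_neg hc, if_neg hc]
    have e2 : FsD G (j + m) (fun i => η (swapIv j (j + m) i) ω) = FsD G j (Φ ω) := by
      refine congrArg G (funext fun k => ?_)
      by_cases h1 : k < j
      · rw [if_pos (by omega : k < j + m), if_pos h1]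
        show η (swapIv j (j + m) (Sum.inl k)) ω = _
        simp only [swapIv]
        rw [if_neg (by omega : ¬(j ≤ k ∧ k < j + m))]
      · by_cases h2 : k < j + m
        · rw [if_pos h2, if_neg h1]
          show η (swapIv j (j + m) (Sum.inl k)) ω = _
          simp only [swapIv]
          rw [if_pos (by omega : j ≤ k ∧ k < j + m)]
        · rw [if_neg h2, if_neg h1]
          show η (swapIv j (j + m) (Sum.inr k)) ω = _
          simp only [swapIv]
          rw [if_neg (by omega : ¬(j ≤ k ∧ k < j + m))]
    rw [e1, e2]
  -- telescoping bound
  have htel : ∀ m : ℕ, A j ≤ (∑ s ∈ Finset.range m, b s) + A (j + m) := by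
    intro m
    have hdecomp : (fun ω => F0 G (Φ ω) - FsD G j (Φ ω))
        = (fun ω => F0 G (Φ ω) - FZD G j m (Φ ω))
          + (fun ω => FZD G j m (Φ ω) - FsD G j (Φ ω)) :=
      funext fun ω => (sub_add_sub_cancel _ _ _).symm
    have h1 : A j ≤ eLpNorm (fun ω => F0 G (Φ ω) - FZD G j m (Φ ω)) p ℙ + A (j + m) := by
      rw [← hswap2 m]
      show eLpNorm (fun ω => F0 G (Φ ω) - FsD G j (Φ ω)) p ℙ ≤ _
      rw [hdecomp]
      exact eLpNorm_add_le
        (((hmF0.comp hΦ).sub ((hmFZ m).comp hΦ)).aestronglyMeasurable)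
        ((((hmFZ m).comp hΦ).sub ((hmFs j).comp hΦ)).aestronglyMeasurable) hp1
    have htelfun : (fun ω => F0 G (Φ ω) - FZD G j m (Φ ω))
        = ∑ s ∈ Finset.range m, fun ω => FZD G j s (Φ ω) - FZD G j (s + 1) (Φ ω) := by
      funext ω
      rw [Finset.sum_apply]
      have hsum := Finset.sum_range_sub' (f := fun s => FZD G j s (Φ ω)) (n := m)
      rw [hsum]
      have h0 : FZD G j 0 (Φ ω) = F0 G (Φ ω) := by
        refine congrArg G (funext fun k => ?_)
        rw [if_neg (by omega : ¬(j ≤ k ∧ k < j + 0))]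
      rw [h0]
    have h2 : eLpNorm (fun ω => F0 G (Φ ω) - FZD G j m (Φ ω)) p ℙ
        ≤ ∑ s ∈ Finset.range m, b s := by
      rw [htelfun]
      refine le_trans (eLpNorm_sum_le (fun s _ =>
        (((hmFZ s).comp hΦ).sub ((hmFZ (s + 1)).comp hΦ)).aestronglyMeasurable) hp1) ?_
      exact le_of_eq (Finset.sum_congr rfl fun s _ => hswap1 s)
    exact le_trans h1 (add_le_add h2 le_rfl)
  -- the tail term is small
  have hlim : ∀ r : ℝ≥0∞, r ≠ 0 → ∃ m : ℕ, A (j + m) ≤ r := by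
    intro r hr
    set μ₁ := Measure.map (fun ω (k : ℕ) => η (Sum.inl k) ω) ℙ with hμ₁
    haveI : IsProbabilityMeasure μ₁ := Measure.isProbabilityMeasure_map hε.aemeasurable
    have hGasm : AEStronglyMeasurable G μ₁ := hG.aestronglyMeasurable
    have hGmem : MemLp G p μ₁ := (memLp_map_measure_iff hGasm hε.aemeasurable).2 hLq
    have hr2 : (r / 2 : ℝ≥0∞) ≠ 0 := (ENNReal.half_pos hr).ne'
    obtain ⟨n, H, hHm, hHinv, hHle⟩ := approx_fin μ₁ hp1 hptop G hGmem hr2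
    refine ⟨n, ?_⟩
    set t := j + n with ht
    have hmHc : Measurable (fun ω => H (fun k => if k < t then η (Sum.inl k) ω
        else η (Sum.inr k) ω)) := by
      refine hHm.comp (measurable_pi_lambda _ fun k => ?_)
      by_cases h : k < t
      · simp only [if_pos h]; exact hmeas _
      · simp only [if_neg h]; exact hmeas _
    have hterm1 : eLpNorm (fun ω => F0 G (Φ ω) - H (fun k => η (Sum.inl k) ω)) p ℙ
        = eLpNorm (G - H) p μ₁ := by
      have h := eLpNorm_map_measure (μ := ℙ) (f := fun ω (k : ℕ) => η (Sum.inl k) ω)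
        (g := G - H) (p := p) (hGasm.sub hHm.aestronglyMeasurable) hε.aemeasurable
      exact h.symm
    have hterm2 : eLpNorm (fun ω => H (fun k => if k < t then η (Sum.inl k) ω
        else η (Sum.inr k) ω) - FsD G t (Φ ω)) p ℙ = eLpNorm (H - G) p μ₁ := by
      have hstep := exch_eLpNorm η hmeas hindep hid (swapTail t)
        (swapTail_involutive t).injective
        (fun x => H (fun k => x (Sum.inl k)) - F0 G x)
        ((hHm.comp (measurable_pi_lambda _ fun k => measurable_pi_apply _)).sub hmF0)
        (fun ω => H (fun k => if k < t then η (Sum.inl k) ω else η (Sum.inr k) ω)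
          - FsD G t (Φ ω))
        (fun ω => H (fun k => η (Sum.inl k) ω) - F0 G (Φ ω))
        (fun ω => ?_) (fun ω => rfl) p
      · rw [hstep]
        have h := eLpNorm_map_measure (μ := ℙ) (f := fun ω (k : ℕ) => η (Sum.inl k) ω)
          (g := H - G) (p := p) (hHm.aestronglyMeasurable.sub hGasm) hε.aemeasurable
        exact h.symm
      · show H (fun k => if k < t then η (Sum.inl k) ω else η (Sum.inr k) ω) - FsD G t (Φ ω)
          = H (fun k => η (swapTail t (Sum.inl k)) ω)
            - F0 G (fun i => η (swapTail t i) ω)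
        have e1 : (fun k => if k < t then η (Sum.inl k) ω else η (Sum.inr k) ω)
            = fun k => η (swapTail t (Sum.inl k)) ω := by
          funext k
          simp only [swapTail]
          by_cases hk : k < t
          · rw [if_pos hk, if_neg (by omega : ¬ t ≤ k)]
          · rw [if_neg hk, if_pos (by omega : t ≤ k)]
        have e2 : FsD G t (Φ ω) = F0 G (fun i => η (swapTail t i) ω) := by
          refine congrArg G (funext fun k => ?_)
          show _ = η (swapTail t (Sum.inl k)) ω
          simp only [swapTail]
          by_cases hk : k < t
          · rw [if_pos hk, if_neg (by omega : ¬ t ≤ k)]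
          · rw [if_neg hk, if_pos (by omega : t ≤ k)]
        rw [e1, e2]
    have hεε' : ∀ ω, H (fun k => η (Sum.inl k) ω)
        = H (fun k => if k < t then η (Sum.inl k) ω else η (Sum.inr k) ω) :=
      fun ω => hHinv _ _ (fun k hk => (if_pos (by omega : k < t)).symm)
    have hdecomp : (fun ω => F0 G (Φ ω) - FsD G t (Φ ω))
        = (fun ω => F0 G (Φ ω) - H (fun k => η (Sum.inl k) ω))
          + (fun ω => H (fun k => if k < t then η (Sum.inl k) ω else η (Sum.inr k) ω)
              - FsD G t (Φ ω)) := by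
      funext ω
      rw [Pi.add_apply, ← hεε' ω, sub_add_sub_cancel]
    show A t ≤ r
    have hAt : A t = eLpNorm (fun ω => F0 G (Φ ω) - FsD G t (Φ ω)) p ℙ := rfl
    rw [hAt, hdecomp]
    refine le_trans (eLpNorm_add_le
      (((hmF0.comp hΦ).sub (hHm.comp hε)).aestronglyMeasurable)
      ((hmHc.sub ((hmFs t).comp hΦ)).aestronglyMeasurable) hp1) ?_
    have hHle' : eLpNorm (H - G) p μ₁ ≤ r / 2 := by
      rw [eLpNorm_sub_comm]; exact hHle
    rw [hterm1, hterm2]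
    calc eLpNorm (G - H) p μ₁ + eLpNorm (H - G) p μ₁ ≤ r / 2 + r / 2 :=
          add_le_add hHle hHle'
      _ = r := ENNReal.add_halves r
  -- conclusion
  show A j ≤ ∑' s, b s
  refine ENNReal.le_of_forall_pos_le_add fun r hr hfin => ?_
  obtain ⟨m, hm⟩ := hlim r (by exact_mod_cast hr.ne')
  calc A j ≤ (∑ s ∈ Finset.range m, b s) + A (j + m) := htel m
    _ ≤ (∑' s, b s) + r := add_le_add (ENNReal.sum_le_tsum _) hm
end

section
/- Let H_n be random cumulative distribution functions and H a fixed continuous cdf on ℝ such that H_n converges weakly to H in probability (i.e., d(H_n, H) → 0 in probability for any metric d metrizing weak convergence). Then for every α ∈ (0,1), E[H(H_n^{−1}(1−α))] → 1 − α as n → ∞, where H^{−1}(p) = inf{x : H(x) ≥ p} is the quantile function. -/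
open MeasureTheory ProbabilityTheory Filter

/-- Asymptotic validity of bootstrap critical values (core of Proposition 4.1): if random
cdfs `H_n` converge weakly in probability to a fixed continuous cdf `H` (equivalently, since
`H` is continuous, pointwise in probability), then `E[H(H_n⁻¹(1−α))] → 1 − α`. -/
theorem stmt_16 {Ω : Type*} [MeasureSpace Ω] [IsProbabilityMeasure (ℙ : Measure Ω)]
    (Hn : ℕ → Ω → ℝ → ℝ) (H : ℝ → ℝ)
    (hHn_mono : ∀ n ω, Monotone (Hn n ω))
    (hHn_rc : ∀ n ω x, ContinuousWithinAt (Hn n ω) (Set.Ici x) x)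
    (hHn_bot : ∀ n ω, Tendsto (Hn n ω) atBot (nhds 0))
    (hHn_top : ∀ n ω, Tendsto (Hn n ω) atTop (nhds 1))
    (hH_mono : Monotone H) (hH_cont : Continuous H)
    (hH_bot : Tendsto H atBot (nhds 0)) (hH_top : Tendsto H atTop (nhds 1))
    (hconv : ∀ x : ℝ, ∀ ε : ℝ, 0 < ε →
      Tendsto (fun n => ℙ {ω | ε < |Hn n ω x - H x|}) atTop (nhds 0))
    (α : ℝ) (hα0 : 0 < α) (hα1 : α < 1)
    (hmeas : ∀ n, Measurable fun ω => sInf {x | 1 - α ≤ Hn n ω x}) :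
    Tendsto (fun n => ∫ ω, H (sInf {x | 1 - α ≤ Hn n ω x}))
      atTop (nhds (1 - α)) := by
  set p := 1 - α with hp
  have hp0 : 0 < p := by simp only [hp]; linarith
  have hp1 : p < 1 := by simp only [hp]; linarith
  -- H takes values in [0,1]
  have hH0 : ∀ x, 0 ≤ H x := by
    intro x
    refine le_of_tendsto hH_bot ?_
    filter_upwards [eventually_le_atBot x] with y hy using hH_mono hy
  have hH1 : ∀ x, H x ≤ 1 := by
    intro x
    refine ge_of_tendsto hH_top ?_
    filter_upwards [eventually_ge_atTop x] with y hy using hH_mono hy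
  -- the quantile random variables and the integrand
  set q : ℕ → Ω → ℝ := fun n ω => sInf {x | p ≤ Hn n ω x} with hq
  set f : ℕ → Ω → ℝ := fun n ω => H (q n ω) with hf
  have hfmeas : ∀ n, Measurable (f n) := fun n => hH_cont.measurable.comp (hmeas n)
  have hfint : ∀ n, Integrable (f n) := by
    intro n
    refine (integrable_const (1:ℝ)).mono' (hfmeas n).aestronglyMeasurable ?_
    filter_upwards with ω
    rw [Real.norm_eq_abs, abs_of_nonneg (hH0 _)]
    exact hH1 _
  rw [Metric.tendsto_nhds]
  intro ε hε
  set ε' : ℝ := min (ε / 3) (min (p / 2) ((1 - p) / 2)) with hε'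
  have hε'0 : 0 < ε' := by
    apply lt_min (by linarith) (lt_min (by linarith) (by linarith))
  have hε'ε : ε' ≤ ε / 3 := min_le_left _ _
  have hε'p : ε' ≤ p / 2 := le_trans (min_le_right _ _) (min_le_left _ _)
  have hε'1p : ε' ≤ (1 - p) / 2 := le_trans (min_le_right _ _) (min_le_right _ _)
  -- find a, b with H a = p - ε', H b = p + ε'
  have hivt : ∀ c : ℝ, 0 < c → c < 1 → ∃ x, H x = c := by
    intro c hc0 hc1
    obtain ⟨x0, hx0⟩ := (hH_bot.eventually (gt_mem_nhds hc0)).exists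
    obtain ⟨x1, hx1⟩ := (hH_top.eventually (lt_mem_nhds hc1)).exists
    have hx01 : x0 ≤ x1 := by
      by_contra h
      push_neg at h
      exact absurd (hH_mono h.le) (by linarith)
    have := intermediate_value_Icc hx01 hH_cont.continuousOn
    obtain ⟨x, _, hx⟩ := this ⟨hx0.le, hx1.le⟩
    exact ⟨x, hx⟩
  obtain ⟨a, ha⟩ := hivt (p - ε') (by linarith) (by linarith)
  obtain ⟨b, hb⟩ := hivt (p + ε') (by linarith) (by linarith)
  -- pointwise key estimate on the good event
  have key : ∀ n ω, Hn n ω a < p → p ≤ Hn n ω b → |f n ω - p| ≤ ε' := by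
    intro n ω h1 h2
    have hlb : ∀ x ∈ {x | p ≤ Hn n ω x}, a ≤ x := by
      intro x hx
      by_contra h
      push_neg at h
      have := hHn_mono n ω h.le
      exact absurd (le_trans hx this) (not_le.mpr h1)
    have hq1 : a ≤ q n ω := le_csInf ⟨b, h2⟩ hlb
    have hq2 : q n ω ≤ b := csInf_le ⟨a, hlb⟩ h2
    have hHa := hH_mono hq1
    have hHb := hH_mono hq2
    rw [abs_le]
    constructor <;> simp only [hf] <;> linarith
  -- bad events
  set B1 : ℕ → Set Ω := fun n => {ω | ε' / 2 < |Hn n ω a - H a|} with hB1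
  set B2 : ℕ → Set Ω := fun n => {ω | ε' / 2 < |Hn n ω b - H b|} with hB2
  set T : ℕ → Set Ω := fun n => toMeasurable ℙ (B1 n ∪ B2 n) with hT
  have hTmeas : ∀ n, MeasurableSet (T n) := fun n => measurableSet_toMeasurable _ _
  have hgood : ∀ n ω, ω ∉ T n → Hn n ω a < p ∧ p ≤ Hn n ω b := by
    intro n ω hω
    have hω' : ω ∉ B1 n ∪ B2 n := fun h => hω (subset_toMeasurable _ _ h)
    have h1 : ¬ (ε' / 2 < |Hn n ω a - H a|) := fun h => hω' (Or.inl h)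
    have h2 : ¬ (ε' / 2 < |Hn n ω b - H b|) := fun h => hω' (Or.inr h)
    push_neg at h1 h2
    rw [abs_le] at h1 h2
    constructor
    · have := h1.2; linarith
    · have := h2.1; linarith
  -- pointwise bound by ε' + indicator
  have hbound : ∀ n ω, |f n ω - p| ≤ ε' + (T n).indicator (fun _ => (1:ℝ)) ω := by
    intro n ω
    by_cases hω : ω ∈ T n
    · rw [Set.indicator_of_mem hω]
      have h0 := hH0 (q n ω)
      have h1 := hH1 (q n ω)
      rw [abs_le]
      constructor <;> simp only [hf] <;> linarith
    · rw [Set.indicator_of_notMem hω]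
      obtain ⟨h1, h2⟩ := hgood n ω hω
      have := key n ω h1 h2
      linarith
  -- integral estimate
  have hind_int : ∀ n, Integrable ((T n).indicator (fun _ => (1:ℝ))) := fun n =>
    (integrable_const (1:ℝ)).indicator (hTmeas n)
  have hmain : ∀ n, dist (∫ ω, f n ω) p ≤ ε' + (ℙ (T n)).toReal := by
    intro n
    have h1 : dist (∫ ω, f n ω) p = |∫ ω, (f n ω - p)| := by
      rw [Real.dist_eq, integral_sub (hfint n) (integrable_const p), integral_const]
      simp [measure_univ]
    rw [h1]
    calc |∫ ω, (f n ω - p)| ≤ ∫ ω, |f n ω - p| := by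
          simpa [Real.norm_eq_abs] using
            norm_integral_le_integral_norm (μ := (ℙ : Measure Ω)) (fun ω => f n ω - p)
      _ ≤ ∫ ω, (ε' + (T n).indicator (fun _ => (1:ℝ)) ω) := by
          refine integral_mono ((hfint n).sub (integrable_const p)).abs
            ((integrable_const ε').add (hind_int n)) ?_
          intro ω
          exact hbound n ω
      _ = ε' + (ℙ (T n)).toReal := by
          rw [integral_add (integrable_const ε') (hind_int n), integral_const,
            integral_indicator_const (1:ℝ) (hTmeas n)]
          simp [measure_univ, Measure.real]
  -- measure of T n tends to 0
  have hTle : ∀ n, (ℙ (T n)).toReal ≤ (ℙ (B1 n)).toReal + (ℙ (B2 n)).toReal := by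
    intro n
    have h1 : ℙ (T n) = ℙ (B1 n ∪ B2 n) := measure_toMeasurable _
    have h2 : ℙ (B1 n ∪ B2 n) ≤ ℙ (B1 n) + ℙ (B2 n) := measure_union_le _ _
    rw [h1]
    calc (ℙ (B1 n ∪ B2 n)).toReal ≤ (ℙ (B1 n) + ℙ (B2 n)).toReal :=
          ENNReal.toReal_mono (by finiteness) h2
      _ = (ℙ (B1 n)).toReal + (ℙ (B2 n)).toReal :=
          ENNReal.toReal_add (measure_ne_top _ _) (measure_ne_top _ _)
  have hc1 : Tendsto (fun n => (ℙ (B1 n)).toReal) atTop (nhds 0) := by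
    have := (ENNReal.tendsto_toReal (by simp : (0:ENNReal) ≠ ⊤)).comp
      (hconv a (ε' / 2) (by linarith))
    exact this
  have hc2 : Tendsto (fun n => (ℙ (B2 n)).toReal) atTop (nhds 0) := by
    have := (ENNReal.tendsto_toReal (by simp : (0:ENNReal) ≠ ⊤)).comp
      (hconv b (ε' / 2) (by linarith))
    exact this
  have hev1 : ∀ᶠ n in atTop, (ℙ (B1 n)).toReal < ε / 6 :=
    hc1.eventually (gt_mem_nhds (by linarith))
  have hev2 : ∀ᶠ n in atTop, (ℙ (B2 n)).toReal < ε / 6 :=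
    hc2.eventually (gt_mem_nhds (by linarith))
  filter_upwards [hev1, hev2] with n h1 h2
  have := hmain n
  have := hTle n
  calc dist (∫ ω, f n ω) p ≤ ε' + (ℙ (T n)).toReal := hmain n
    _ ≤ ε' + ((ℙ (B1 n)).toReal + (ℙ (B2 n)).toReal) := by linarith [hTle n]
    _ < ε := by linarith
end
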